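/- arXiv:1208.0804 — 6 statements merged into one kernel-verified Lean document; each statement's English description precedes it below -/
import Mathlib

section
/- Let R>0, η>0 be reals, let Ψ, Y : ℝ×ℝ → ℝ be functions of (r,R) with Ψ twice differentiable in R and once in r, Y differentiable in R, and let Q : ℝ → ℝ be differentiable. At a point (r,R) with R>0, Y(r,R)≠0, ∂Ψ/∂r(r,R)≠0 and ∂Ψ₁/∂r(r,R)≠0, define the off-shell fields ε(r,R,η) = η·(∂Ψ/∂r)/(4πR²Y) + (∂Ψ/∂R)/(4πR²), p_r(r,R) = −(∂Ψ/∂R)/(4πR²), p_t(r,R,η) = −(η/(8πR))·∂/∂R[(∂Ψ/∂r)/Y] − (∂²Ψ/∂R²)/(8πR), and let ε₁, p_{r1}, p_{t1} be given by the same formulas with Ψ replaced by Ψ₁(r,R) := Ψ(r,R) − Q(r)²/(2R) and Y replaced by Y₁(r,R) := ((∂Ψ₁/∂r)/(∂Ψ/∂r))·Y(r,R). Then ε₁ = ε + Q(r)²/(8πR⁴), p_{r1} = p_r − Q(r)²/(8πR⁴), and p_{t1} = p_t + Q(r)²/(8πR⁴). -/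
open Filter Topology

/-- Energy density (off-shell), as a function of the mass function `Ψ`,
the function `Y`, at the point `(r, R)` with internal variable `η`. -/
noncomputable def epsF (Ψ Y : ℝ → ℝ → ℝ) (r R η : ℝ) : ℝ :=
  η * (deriv (fun s => Ψ s R) r) / (4 * Real.pi * R ^ 2 * Y r R)
    + (deriv (fun ρ => Ψ r ρ) R) / (4 * Real.pi * R ^ 2)

/-- Radial pressure (off-shell). -/
noncomputable def prF (Ψ : ℝ → ℝ → ℝ) (r R : ℝ) : ℝ :=
  - (deriv (fun ρ => Ψ r ρ) R) / (4 * Real.pi * R ^ 2)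

/-- Tangential pressure (off-shell). -/
noncomputable def ptF (Ψ Y : ℝ → ℝ → ℝ) (r R η : ℝ) : ℝ :=
  - (η / (8 * Real.pi * R)) * (deriv (fun ρ => (deriv (fun s => Ψ s ρ) r) / Y r ρ) R)
    - (deriv (fun ρ => deriv (fun σ => Ψ r σ) ρ) R) / (8 * Real.pi * R)

/-- The charged mass function `Ψ₁ = Ψ - Q²/(2R)`. -/
noncomputable def Psi1 (Ψ : ℝ → ℝ → ℝ) (Q : ℝ → ℝ) : ℝ → ℝ → ℝ :=
  fun s ρ => Ψ s ρ - Q s ^ 2 / (2 * ρ)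

/-- The charged function `Y₁ = ((∂Ψ₁/∂r)/(∂Ψ/∂r))·Y`. -/
noncomputable def Y1F (Ψ Y : ℝ → ℝ → ℝ) (Q : ℝ → ℝ) : ℝ → ℝ → ℝ :=
  fun s ρ => (deriv (fun t => Psi1 Ψ Q t ρ) s / deriv (fun t => Ψ t ρ) s) * Y s ρ

lemma deriv_Psi1_r (Ψ : ℝ → ℝ → ℝ) (Q : ℝ → ℝ) (s ρ : ℝ)
    (hΨr : DifferentiableAt ℝ (fun t => Ψ t ρ) s) (hQd : DifferentiableAt ℝ Q s)
    (hρ : ρ ≠ 0) :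
    deriv (fun t => Psi1 Ψ Q t ρ) s = deriv (fun t => Ψ t ρ) s - Q s * deriv Q s / ρ := by
  have h1 : HasDerivAt (fun t => Q t ^ 2 / (2 * ρ)) ((2 * Q s ^ 1 * deriv Q s) / (2 * ρ)) s :=
    ((hQd.hasDerivAt.pow 2)).div_const _
  have h2 : deriv (fun t => Ψ t ρ - Q t ^ 2 / (2 * ρ)) s = _ := (hΨr.hasDerivAt.sub h1).deriv
  rw [show (fun t => Psi1 Ψ Q t ρ) = fun t => Ψ t ρ - Q t ^ 2 / (2 * ρ) from rfl, h2]
  field_simp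

lemma hasDerivAt_QQ (q ρ : ℝ) (hρ : ρ ≠ 0) :
    HasDerivAt (fun σ : ℝ => q / (2 * σ)) (-(q / (2 * ρ ^ 2))) ρ := by
  have h1 : HasDerivAt (fun σ : ℝ => q / 2 * σ⁻¹) (q / 2 * (-(ρ ^ 2)⁻¹)) ρ :=
    (hasDerivAt_inv hρ).const_mul _
  have hfun : (fun σ : ℝ => q / (2 * σ)) = fun σ => q / 2 * σ⁻¹ := by funext σ; ring
  rw [hfun]
  convert h1 using 1
  field_simp

lemma hasDerivAt_Psi1_R (Ψ : ℝ → ℝ → ℝ) (Q : ℝ → ℝ) (s ρ : ℝ)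
    (hΨR : DifferentiableAt ℝ (fun σ => Ψ s σ) ρ) (hρ : ρ ≠ 0) :
    HasDerivAt (fun σ => Psi1 Ψ Q s σ) (deriv (fun σ => Ψ s σ) ρ + Q s ^ 2 / (2 * ρ ^ 2)) ρ := by
  have := hΨR.hasDerivAt.sub (hasDerivAt_QQ (Q s ^ 2) ρ hρ)
  rw [sub_neg_eq_add] at this; exact this

lemma hasDerivAt_Qρ2 (q ρ : ℝ) (hρ : ρ ≠ 0) :
    HasDerivAt (fun σ : ℝ => q / (2 * σ ^ 2)) (-(q / ρ ^ 3)) ρ := by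
  have hp : HasDerivAt (fun σ : ℝ => σ ^ 2) (2 * ρ ^ 1) ρ := by
    simpa using hasDerivAt_pow 2 ρ
  have h1 : HasDerivAt (fun σ : ℝ => q / 2 * (σ ^ 2)⁻¹)
      (q / 2 * (-(2 * ρ ^ 1) / (ρ ^ 2) ^ 2)) ρ := (hp.inv (pow_ne_zero 2 hρ)).const_mul _
  have hfun : (fun σ : ℝ => q / (2 * σ ^ 2)) = fun σ => q / 2 * (σ ^ 2)⁻¹ := by funext σ; ring
  rw [hfun]
  convert h1 using 1
  field_simp

lemma deriv_FG (f g Yr : ℝ → ℝ) (R c : ℝ) (hR : 0 < R)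
    (hfg : ∀ ρ, ρ ≠ 0 → f ρ = g ρ - c / ρ)
    (hY : DifferentiableAt ℝ Yr R) (hYne : Yr R ≠ 0)
    (hfR : f R ≠ 0) (hgR : g R ≠ 0) :
    deriv (fun ρ => f ρ / ((f ρ / g ρ) * Yr ρ)) R = deriv (fun ρ => g ρ / Yr ρ) R := by
  by_cases hcase : ∀ᶠ ρ in 𝓝 R, ¬(f ρ = 0 ∧ g ρ ≠ 0)
  · have hYn : ∀ᶠ ρ in 𝓝 R, Yr ρ ≠ 0 := hY.continuousAt.eventually_ne hYne
    have heq : (fun ρ => f ρ / (f ρ / g ρ * Yr ρ)) =ᶠ[𝓝 R] fun ρ => g ρ / Yr ρ := by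
      filter_upwards [hcase, hYn] with ρ hc hy
      by_cases hg : g ρ = 0
      · simp [hg]
      · have hf : f ρ ≠ 0 := fun h => hc ⟨h, hg⟩
        field_simp
    exact heq.deriv_eq
  · have hfreq : ∃ᶠ ρ in 𝓝 R, f ρ = 0 ∧ g ρ ≠ 0 := by
      simpa [Filter.not_eventually, not_not] using hcase
    have hl : (𝓝 R ⊓ 𝓟 {ρ | f ρ = 0 ∧ g ρ ≠ 0}).NeBot := Filter.frequently_iff_neBot.mp hfreq
    set l := 𝓝 R ⊓ 𝓟 {ρ | f ρ = 0 ∧ g ρ ≠ 0} with hldef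
    have hl_le : l ≤ 𝓝 R := inf_le_left
    have hmem : ∀ᶠ ρ in l, f ρ = 0 ∧ g ρ ≠ 0 :=
      (Filter.eventually_principal.mpr fun ρ h => h).filter_mono inf_le_right
    have hFRval : f R / (f R / g R * Yr R) = g R / Yr R := by field_simp
    have hFnd : ¬ DifferentiableAt ℝ (fun ρ => f ρ / (f ρ / g ρ * Yr ρ)) R := by
      intro hd
      have h0 : Tendsto (fun ρ => f ρ / (f ρ / g ρ * Yr ρ)) l
          (𝓝 (f R / (f R / g R * Yr R))) := hd.continuousAt.tendsto.mono_left hl_le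
      have h1 : (fun ρ => f ρ / (f ρ / g ρ * Yr ρ)) =ᶠ[l] fun _ => (0:ℝ) := by
        filter_upwards [hmem] with ρ h; simp [h.1]
      have h2 : Tendsto (fun ρ => f ρ / (f ρ / g ρ * Yr ρ)) l (𝓝 0) :=
        Filter.Tendsto.congr' h1.symm tendsto_const_nhds
      have := tendsto_nhds_unique h0 h2
      rw [hFRval] at this
      exact (div_ne_zero hgR hYne) this
    have hne0 : ∀ᶠ ρ in l, ρ ≠ (0:ℝ) := (eventually_ne_nhds hR.ne').filter_mono hl_le
    have hGnd : ¬ DifferentiableAt ℝ (fun ρ => g ρ / Yr ρ) R := by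
      intro hd
      have h0 : Tendsto (fun ρ => g ρ / Yr ρ) l (𝓝 (g R / Yr R)) :=
        hd.continuousAt.tendsto.mono_left hl_le
      have h1 : (fun ρ => g ρ / Yr ρ) =ᶠ[l] fun ρ => (c / ρ) / Yr ρ := by
        filter_upwards [hmem, hne0] with ρ h hρ
        have hg : g ρ = c / ρ := by
          have h2 := h.1
          rw [hfg ρ hρ] at h2
          linarith
        rw [hg]
      have h2 : Tendsto (fun ρ => (c / ρ) / Yr ρ) l (𝓝 ((c / R) / Yr R)) := by
        apply Tendsto.mono_left _ hl_le
        exact (tendsto_const_nhds.div tendsto_id hR.ne').div hY.continuousAt.tendsto hYne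
      have h3 := tendsto_nhds_unique h0 (Filter.Tendsto.congr' h1.symm h2)
      have hgc : g R = c / R := by
        field_simp at h3
        rw [eq_div_iff hR.ne']
        linear_combination h3
      have : f R = 0 := by rw [hfg R hR.ne', hgc]; ring
      exact hfR this
    rw [deriv_zero_of_not_differentiableAt hFnd, deriv_zero_of_not_differentiableAt hGnd]

/-- Adding an electromagnetic charge `Q(r)` to the elastic spherical model `(Ψ, Y)`
shifts the diagonal stress-energy components by `±Q²/(8πR⁴)`. -/
theorem charged_stress_energy
    (Ψ Y : ℝ → ℝ → ℝ) (Q : ℝ → ℝ) (r R η : ℝ)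
    (hR : 0 < R) (hη : 0 < η)
    (hΨr : ∀ s ρ, DifferentiableAt ℝ (fun t => Ψ t ρ) s)
    (hΨR : ∀ s ρ, DifferentiableAt ℝ (fun σ => Ψ s σ) ρ)
    (hΨRR : ∀ s ρ, DifferentiableAt ℝ (fun σ => deriv (fun τ => Ψ s τ) σ) ρ)
    (hYd : ∀ s ρ, DifferentiableAt ℝ (fun σ => Y s σ) ρ)
    (hQd : Differentiable ℝ Q)
    (hYne : Y r R ≠ 0)
    (hΨrne : deriv (fun t => Ψ t R) r ≠ 0)
    (hΨ1rne : deriv (fun t => Psi1 Ψ Q t R) r ≠ 0) :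
    epsF (Psi1 Ψ Q) (Y1F Ψ Y Q) r R η
        = epsF Ψ Y r R η + Q r ^ 2 / (8 * Real.pi * R ^ 4) ∧
    prF (Psi1 Ψ Q) r R = prF Ψ r R - Q r ^ 2 / (8 * Real.pi * R ^ 4) ∧
    ptF (Psi1 Ψ Q) (Y1F Ψ Y Q) r R η
        = ptF Ψ Y r R η + Q r ^ 2 / (8 * Real.pi * R ^ 4) := by
  have hπ : Real.pi ≠ 0 := Real.pi_ne_zero
  have hRne : R ≠ 0 := hR.ne'
  set f : ℝ → ℝ := fun ρ => deriv (fun t => Psi1 Ψ Q t ρ) r with hfdef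
  set g : ℝ → ℝ := fun ρ => deriv (fun t => Ψ t ρ) r with hgdef
  have hfg : ∀ ρ, ρ ≠ 0 → f ρ = g ρ - (Q r * deriv Q r) / ρ := fun ρ hρ =>
    deriv_Psi1_r Ψ Q r ρ (hΨr r ρ) (hQd r) hρ
  -- derivative of Psi1 in R at the point R
  have hP1R : deriv (fun ρ => Psi1 Ψ Q r ρ) R
      = deriv (fun ρ => Ψ r ρ) R + Q r ^ 2 / (2 * R ^ 2) :=
    (hasDerivAt_Psi1_R Ψ Q r R (hΨR r R) hRne).deriv
  refine ⟨?_, ?_, ?_⟩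
  · -- energy density
    simp only [epsF, Y1F, hP1R]
    have key : η * f R / (4 * Real.pi * R ^ 2 * (f R / g R * Y r R))
        = η * g R / (4 * Real.pi * R ^ 2 * Y r R) := by
      field_simp
      exact mul_div_cancel_left₀ (g R) (show f R ≠ 0 from hΨ1rne)
    calc η * f R / (4 * Real.pi * R ^ 2 * (f R / g R * Y r R))
          + (deriv (fun ρ => Ψ r ρ) R + Q r ^ 2 / (2 * R ^ 2)) / (4 * Real.pi * R ^ 2)
        = η * g R / (4 * Real.pi * R ^ 2 * Y r R)
          + (deriv (fun ρ => Ψ r ρ) R + Q r ^ 2 / (2 * R ^ 2)) / (4 * Real.pi * R ^ 2) := by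
          rw [key]
      _ = η * g R / (4 * Real.pi * R ^ 2 * Y r R)
          + deriv (fun ρ => Ψ r ρ) R / (4 * Real.pi * R ^ 2)
          + Q r ^ 2 / (8 * Real.pi * R ^ 4) := by field_simp; ring
  · -- radial pressure
    simp only [prF, hP1R]
    field_simp
    ring
  · -- tangential pressure
    have hder1 : deriv (fun ρ => f ρ / ((f ρ / g ρ) * Y r ρ)) R
        = deriv (fun ρ => g ρ / Y r ρ) R :=
      deriv_FG f g (fun ρ => Y r ρ) R (Q r * deriv Q r) hR hfg (hYd r R) hYne hΨ1rne hΨrne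
    -- second R-derivative of Psi1
    have heq2 : (fun ρ => deriv (fun σ => Psi1 Ψ Q r σ) ρ)
        =ᶠ[𝓝 R] fun ρ => deriv (fun σ => Ψ r σ) ρ + Q r ^ 2 / (2 * ρ ^ 2) := by
      filter_upwards [eventually_ne_nhds hRne] with ρ hρ
      exact (hasDerivAt_Psi1_R Ψ Q r ρ (hΨR r ρ) hρ).deriv
    have hder2 : deriv (fun ρ => deriv (fun σ => Psi1 Ψ Q r σ) ρ) R
        = deriv (fun σ => deriv (fun τ => Ψ r τ) σ) R + (-(Q r ^ 2 / R ^ 3)) := by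
      rw [heq2.deriv_eq]
      exact ((hΨRR r R).hasDerivAt.add (hasDerivAt_Qρ2 (Q r ^ 2) R hRne)).deriv
    simp only [ptF, Y1F]
    rw [hder1, hder2]
    field_simp
    ring
end

section
/- Assume Ψ(r,R) = ψ₃₀r³ + ψ₂₁r²R + ψ₁₂rR² + ψ₀₃R³ + o((|r|+|R|)³) as (r,R)→(0,0) with ψ₃₀ > 0 and Ψ continuous, and Q(r) = q₀r^{2+p} + o(r^{2+p}) as r→0⁺ with q₀ ≠ 0 and real p > 1. Then there exist ε > 0 and functions R_{h1}, R_{h2} : (0,ε) → ℝ with 0 < R_{h1}(r) < R_{h2}(r) ≤ r, such that for i = 1,2 and all r ∈ (0,ε), R_{hi}(r)² − 2Ψ(r,R_{hi}(r))·R_{hi}(r) + Q(r)² = 0 (i.e. R_{hi}(r) = 2Ψ₁(r,R_{hi}(r)) where Ψ₁ = Ψ − Q²/(2R)), and moreover lim_{r→0⁺} R_{h1}(r)/r^{2p+1} = q₀²/(2ψ₃₀) and lim_{r→0⁺} R_{h2}(r)/r³ = 2ψ₃₀. -/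
open Filter Topology Asymptotics

set_option maxHeartbeats 1000000 in
/-- Case `p > 1`: two apparent-horizon branches `R_{h1} < R_{h2}` solving
`R² - 2Ψ(r,R)R + Q(r)² = 0`, with `R_{h1}(r) ~ (q₀²/(2ψ₃₀))r^{2p+1}` and
`R_{h2}(r) ~ 2ψ₃₀ r³` as `r → 0⁺`. -/
theorem horizons_p_gt_one
    (Ψ : ℝ → ℝ → ℝ) (Q : ℝ → ℝ) (ψ30 ψ21 ψ12 ψ03 q0 p : ℝ)
    (hψ30 : 0 < ψ30) (hq0 : q0 ≠ 0) (hp : 1 < p)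
    (hΨcont : Continuous (fun q : ℝ × ℝ => Ψ q.1 q.2))
    (hΨ : (fun q : ℝ × ℝ =>
        Ψ q.1 q.2 - (ψ30*q.1^3 + ψ21*q.1^2*q.2 + ψ12*q.1*q.2^2 + ψ03*q.2^3))
      =o[nhds ((0:ℝ), (0:ℝ))] fun q : ℝ × ℝ => (|q.1| + |q.2|)^3)
    (hQ : (fun r : ℝ => Q r - q0 * r ^ (2+p)) =o[𝓝[>] (0:ℝ)] fun r : ℝ => r ^ (2+p)) :
    ∃ ε > 0, ∃ Rh1 Rh2 : ℝ → ℝ,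
      (∀ r ∈ Set.Ioo (0:ℝ) ε,
        0 < Rh1 r ∧ Rh1 r < Rh2 r ∧ Rh2 r ≤ r ∧
        (Rh1 r)^2 - 2 * Ψ r (Rh1 r) * Rh1 r + (Q r)^2 = 0 ∧
        (Rh2 r)^2 - 2 * Ψ r (Rh2 r) * Rh2 r + (Q r)^2 = 0) ∧
      Tendsto (fun r : ℝ => Rh1 r / r ^ (2*p+1)) (𝓝[>] (0:ℝ)) (𝓝 (q0^2 / (2*ψ30))) ∧
      Tendsto (fun r : ℝ => Rh2 r / r^3) (𝓝[>] (0:ℝ)) (𝓝 (2*ψ30)) := by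
  classical
  set M : ℝ := |ψ21| + |ψ12| + |ψ03| with hMdef
  have hM0 : 0 ≤ M := by positivity
  -- key uniform estimate on Ψ
  have keyΨ : ∀ c : ℝ, 0 < c → ∀ᶠ r in 𝓝[>](0:ℝ), ∀ R, 0 ≤ R → R ≤ r →
      |Ψ r R - ψ30*r^3| ≤ c*r^3 + M*(r^2*R) := by
    intro c hc
    have h8 : (0:ℝ) < c/8 := by linarith
    have hev := hΨ.def h8
    rw [Metric.eventually_nhds_iff] at hev
    obtain ⟨δ, hδ, hball⟩ := hev
    filter_upwards [Ioo_mem_nhdsGT_of_mem ⟨le_refl (0:ℝ), hδ⟩] with r hr R hR0 hRr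
    have hr0 : 0 < r := hr.1
    have hdist : dist ((r,R)) ((0:ℝ),(0:ℝ)) < δ := by
      rw [Prod.dist_eq]
      simp only [Real.dist_eq, sub_zero]
      exact max_lt (by rw [abs_of_pos hr0]; exact hr.2)
        (by rw [abs_of_nonneg hR0]; exact lt_of_le_of_lt hRr hr.2)
    have h1 := hball hdist
    simp only [Real.norm_eq_abs] at h1
    have habs : |r| = r := abs_of_pos hr0
    have hAbs : |R| = R := abs_of_nonneg hR0
    rw [habs, hAbs] at h1
    have hcube : |(r+R)^3| ≤ 8*r^3 := by
      rw [abs_of_nonneg (by positivity)]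
      have h2 : (r+R)^3 ≤ (2*r)^3 := pow_le_pow_left₀ (by positivity) (by linarith) 3
      nlinarith [h2]
    have hP : |ψ21*r^2*R + ψ12*r*R^2 + ψ03*R^3| ≤ M*(r^2*R) := by
      refine (abs_add_three _ _ _).trans ?_
      simp only [abs_mul, abs_pow, habs, hAbs, hMdef]
      have e1 : r*R^2 ≤ r^2*R := by nlinarith [mul_le_mul_of_nonneg_left hRr (mul_nonneg hr0.le hR0)]
      have e2 : R^3 ≤ r^2*R := by nlinarith [mul_le_mul_of_nonneg_left (mul_self_le_mul_self hR0 hRr) hR0]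
      have f1 := mul_le_mul_of_nonneg_left e1 (abs_nonneg ψ12)
      have f2 := mul_le_mul_of_nonneg_left e2 (abs_nonneg ψ03)
      nlinarith [abs_nonneg ψ21, abs_nonneg ψ12, abs_nonneg ψ03, f1, f2, mul_nonneg (mul_nonneg hr0.le hr0.le) hR0]
    have hsplit : Ψ r R - ψ30*r^3 =
        (Ψ r R - (ψ30*r^3 + ψ21*r^2*R + ψ12*r*R^2 + ψ03*R^3))
          + (ψ21*r^2*R + ψ12*r*R^2 + ψ03*R^3) := by ring
    rw [hsplit]
    refine (abs_add_le _ _).trans ?_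
    have : |Ψ r R - (ψ30*r^3 + ψ21*r^2*R + ψ12*r*R^2 + ψ03*R^3)| ≤ c*r^3 := by
      refine h1.trans ?_
      have := hcube
      nlinarith
    linarith [hP, this]
  -- key estimate on Q
  have keyQ : ∀ c : ℝ, 0 < c → ∀ᶠ r in 𝓝[>](0:ℝ), |Q r - q0*r^(2+p)| ≤ c*r^(2+p) := by
    intro c hc
    filter_upwards [hQ.def hc, self_mem_nhdsWithin] with r h1 hr
    rw [Real.norm_eq_abs, Real.norm_eq_abs,
      abs_of_pos (Real.rpow_pos_of_pos hr _)] at h1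
    exact h1
  -- power tendsto helpers
  have T0 : ∀ c : ℝ, 0 < c → Tendsto (fun r : ℝ => r ^ c) (𝓝[>](0:ℝ)) (𝓝 0) := by
    intro c hc
    have h := (Real.continuousAt_rpow_const 0 c (Or.inr hc.le)).tendsto
    rw [Real.zero_rpow hc.ne'] at h
    exact h.mono_left nhdsWithin_le_nhds
  have hTr2 : Tendsto (fun r : ℝ => r^2) (𝓝[>](0:ℝ)) (𝓝 0) := by
    have h : Tendsto (fun r : ℝ => r^2) (𝓝 (0:ℝ)) (𝓝 0) := by
      simpa using (continuous_pow 2).tendsto (0:ℝ)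
    exact h.mono_left nhdsWithin_le_nhds
  have evsm : ∀ C δ : ℝ, 0 < δ → ∀ᶠ r in 𝓝[>](0:ℝ), C*r^2 < δ := by
    intro C δ hδ
    exact (by simpa using hTr2.const_mul C : Tendsto (fun r : ℝ => C*r^2) (𝓝[>](0:ℝ)) (𝓝 0)).eventually_lt_const hδ
  have hp2 : (0:ℝ) < 2*p - 2 := by linarith
  have evsm' : ∀ C δ : ℝ, 0 < δ → ∀ᶠ r in 𝓝[>](0:ℝ), C*r^(2*p-2) < δ := by
    intro C δ hδ
    exact (by simpa using (T0 _ hp2).const_mul C :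
      Tendsto (fun r : ℝ => C*r^(2*p-2)) (𝓝[>](0:ℝ)) (𝓝 0)).eventually_lt_const hδ
  -- bounds on |Q|
  have hq0' : 0 < |q0| := abs_pos.mpr hq0
  have hQb : ∀ᶠ r in 𝓝[>](0:ℝ), |Q r| ≤ (|q0|+1)*r^(2+p) ∧ (|q0|/2)*r^(2+p) ≤ |Q r| := by
    filter_upwards [keyQ 1 one_pos, keyQ (|q0|/2) (by positivity), self_mem_nhdsWithin]
      with r h1 h2 hr
    have hrp : (0:ℝ) < r^(2+p) := Real.rpow_pos_of_pos hr _
    constructor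
    · have e : Q r = (Q r - q0*r^(2+p)) + q0*r^(2+p) := by ring
      rw [e]
      refine (abs_add_le _ _).trans ?_
      rw [abs_mul, abs_of_pos hrp]
      nlinarith
    · have := abs_sub_abs_le_abs_sub (q0*r^(2+p)) (Q r)
      rw [abs_sub_comm] at this
      rw [abs_mul, abs_of_pos hrp] at this
      nlinarith
  have hQsq : ∀ᶠ r in 𝓝[>](0:ℝ),
      (Q r)^2 ≤ (|q0|+1)^2*(r^(2*p-2)*r^6) ∧ 0 < (Q r)^2 := by
    filter_upwards [hQb, self_mem_nhdsWithin] with r hb hr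
    have hrp : (0:ℝ) < r^(2+p) := Real.rpow_pos_of_pos hr _
    have hpow : (r^(2+p))^2 = r^(2*p-2) * r^6 := by
      rw [sq, ← Real.rpow_add hr,
        show (2+p)+(2+p) = (2*p-2) + ((6:ℕ):ℝ) by push_cast; ring,
        Real.rpow_add hr, Real.rpow_natCast]
    constructor
    · have h1 : (Q r)^2 ≤ ((|q0|+1)*r^(2+p))^2 := by
        rw [← sq_abs (Q r)]
        exact pow_le_pow_left₀ (abs_nonneg _) hb.1 2
      calc (Q r)^2 ≤ ((|q0|+1)*r^(2+p))^2 := h1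
        _ = (|q0|+1)^2*((r^(2+p))^2) := by ring
        _ = (|q0|+1)^2*(r^(2*p-2)*r^6) := by rw [hpow]
    · have : 0 < |Q r| := lt_of_lt_of_le (by positivity) hb.2
      rw [← sq_abs (Q r)]
      positivity
  have hψ8 : (0:ℝ) < ψ30/8 := by linarith
  -- existence of the two roots, eventually
  have hEx : ∀ᶠ r in 𝓝[>](0:ℝ),
      (∃ R, (0 < R ∧ R < ψ30*r^3) ∧ R^2 - 2*Ψ r R*R + (Q r)^2 = 0) ∧
      (∃ R, (ψ30*r^3 < R ∧ R ≤ r) ∧ R^2 - 2*Ψ r R*R + (Q r)^2 = 0) := by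
    filter_upwards [keyΨ (ψ30/8) hψ8, hQsq, evsm ψ30 1 one_pos,
      evsm M (1/8) (by norm_num), evsm' ((|q0|+1)^2) (ψ30^2/8) (by positivity),
      evsm (3*ψ30+2*M) 1 one_pos, self_mem_nhdsWithin]
      with r hΨr hQr e1 e2 e3 e4 hr0
    have hr3 : (0:ℝ) < r^3 := pow_pos hr0 3
    have hm0 : 0 < ψ30*r^3 := by positivity
    have hmr : ψ30*r^3 < r := by nlinarith
    have hrp2 : (0:ℝ) < r^(2*p-2) := Real.rpow_pos_of_pos hr0 _
    -- continuity of the fiber function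
    have hcont : Continuous fun R : ℝ => R^2 - 2*Ψ r R*R + (Q r)^2 := by
      have h1 : Continuous fun R : ℝ => Ψ r R :=
        hΨcont.comp (continuous_const.prodMk continuous_id)
      exact ((continuous_pow 2).sub ((continuous_const.mul h1).mul continuous_id)).add continuous_const
    -- value at m := ψ30*r^3 is negative
    have hΨm := hΨr (ψ30*r^3) hm0.le hmr.le
    have habs := abs_le.mp hΨm
    have hMrm : M*(r^2*(ψ30*r^3)) ≤ (1/8)*(ψ30*r^3) := by
      have h := mul_le_mul_of_nonneg_right (le_of_lt e2) (le_of_lt hm0)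
      linarith [h, (by ring : M*r^2*(ψ30*r^3) = M*(r^2*(ψ30*r^3)))]
    have hΨlow : (3/4)*(ψ30*r^3) ≤ Ψ r (ψ30*r^3) := by
      have h1 := habs.1
      linarith
    have hgm : (ψ30*r^3)^2 - 2*Ψ r (ψ30*r^3)*(ψ30*r^3) + (Q r)^2 < 0 := by
      have h6 : (|q0|+1)^2*(r^(2*p-2)*r^6) < (ψ30^2/8)*r^6 := by
        have := mul_lt_mul_of_pos_right e3 (pow_pos hr0 6)
        nlinarith
      nlinarith [hQr.1, mul_le_mul_of_nonneg_right hΨlow (le_of_lt hm0)]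
    -- value at r is positive
    have hΨrr := abs_le.mp (hΨr r hr0.le le_rfl)
    have hgr : 0 < r^2 - 2*Ψ r r*r + (Q r)^2 := by
      have h4 := mul_lt_mul_of_pos_right e4 (pow_pos hr0 2)
      have h5 := mul_le_mul_of_nonneg_left hΨrr.2 (by have : (0:ℝ) < r := hr0; linarith : (0:ℝ) ≤ 2*r)
      nlinarith [hQr.2, pow_pos (show (0:ℝ) < r from hr0) 4, h5, h4, mul_nonneg hψ30.le (pow_pos (show (0:ℝ) < r from hr0) 4).le]
    -- value at 0 is positive
    have hg0 : 0 < (0:ℝ)^2 - 2*Ψ r 0*0 + (Q r)^2 := by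
      simpa using hQr.2
    constructor
    · -- root in (0, m)
      have := intermediate_value_Icc' (le_of_lt hm0) hcont.continuousOn
        (Set.mem_Icc.mpr ⟨hgm.le, hg0.le⟩)
      obtain ⟨R, hR, hfR⟩ := this
      refine ⟨R, ⟨lt_of_le_of_ne hR.1 ?_, lt_of_le_of_ne hR.2 ?_⟩, hfR⟩
      · rintro rfl; exact hg0.ne' hfR
      · rintro rfl; exact hgm.ne hfR
    · -- root in (m, r]
      have := intermediate_value_Icc (le_of_lt hmr) hcont.continuousOn
        (Set.mem_Icc.mpr ⟨hgm.le, hgr.le⟩)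
      obtain ⟨R, hR, hfR⟩ := this
      refine ⟨R, ⟨lt_of_le_of_ne hR.1 ?_, hR.2⟩, hfR⟩
      rintro rfl; exact hgm.ne hfR
  -- choose the two root functions
  have hsel : ∀ r : ℝ, ∃ R1 R2 : ℝ,
      (((∃ R, (0 < R ∧ R < ψ30*r^3) ∧ R^2 - 2*Ψ r R*R + (Q r)^2 = 0) ∧
        (∃ R, (ψ30*r^3 < R ∧ R ≤ r) ∧ R^2 - 2*Ψ r R*R + (Q r)^2 = 0)) →
        (((0 < R1 ∧ R1 < ψ30*r^3) ∧ R1^2 - 2*Ψ r R1*R1 + (Q r)^2 = 0) ∧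
         ((ψ30*r^3 < R2 ∧ R2 ≤ r) ∧ R2^2 - 2*Ψ r R2*R2 + (Q r)^2 = 0))) := by
    intro r
    by_cases h : (∃ R, (0 < R ∧ R < ψ30*r^3) ∧ R^2 - 2*Ψ r R*R + (Q r)^2 = 0) ∧
        (∃ R, (ψ30*r^3 < R ∧ R ≤ r) ∧ R^2 - 2*Ψ r R*R + (Q r)^2 = 0)
    · obtain ⟨⟨R1, h1⟩, ⟨R2, h2⟩⟩ := h
      exact ⟨R1, R2, fun _ => ⟨h1, h2⟩⟩
    · exact ⟨1, 1, fun hc => absurd hc h⟩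
  choose Rh1 Rh2 hsel2 using hsel
  have hspec : ∀ᶠ r in 𝓝[>](0:ℝ),
      ((0 < Rh1 r ∧ Rh1 r < ψ30*r^3) ∧
        (Rh1 r)^2 - 2*Ψ r (Rh1 r)*(Rh1 r) + (Q r)^2 = 0) ∧
      ((ψ30*r^3 < Rh2 r ∧ Rh2 r ≤ r) ∧
        (Rh2 r)^2 - 2*Ψ r (Rh2 r)*(Rh2 r) + (Q r)^2 = 0) :=
    hEx.mono fun r h => hsel2 r h
  -- crude bounds for Rh1
  have hcr1 : ∀ᶠ r in 𝓝[>](0:ℝ), (ψ30/2)*r^3 ≤ 2*Ψ r (Rh1 r) - Rh1 r ∧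
      Rh1 r ≤ (2*(|q0|+1)^2/ψ30)*(r^(2*p-2)*r^3) := by
    filter_upwards [hspec, keyΨ (ψ30/8) hψ8, hQsq, evsm M (1/8) (by norm_num),
      evsm ψ30 1 one_pos, self_mem_nhdsWithin] with r hs hΨr hQr e2 e1 hr0'
    have hr0 : (0:ℝ) < r := hr0'
    obtain ⟨⟨⟨hR0, hRm⟩, heq⟩, -⟩ := hs
    have hr3 : (0:ℝ) < r^3 := pow_pos hr0 3
    have hRr : Rh1 r ≤ r := le_of_lt (lt_of_lt_of_le hRm (by nlinarith))
    have hb := abs_le.mp (hΨr (Rh1 r) hR0.le hRr)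
    have hMR : M*(r^2*Rh1 r) ≤ (1/8)*(ψ30*r^3) := by
      have h := mul_le_mul_of_nonneg_right e2.le hR0.le
      nlinarith
    have hA : (ψ30/2)*r^3 ≤ 2*Ψ r (Rh1 r) - Rh1 r := by linarith [hb.1, hMR, hRm]
    refine ⟨hA, ?_⟩
    have hQeq : Rh1 r * (2*Ψ r (Rh1 r) - Rh1 r) = (Q r)^2 := by linear_combination -heq
    have hK : (2*(|q0|+1)^2/ψ30)*(r^(2*p-2)*r^3)
        = ((|q0|+1)^2*(r^(2*p-2)*r^6)) / ((ψ30/2)*r^3) := by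
      field_simp
    rw [hK, le_div_iff₀ (mul_pos (by linarith) hr3)]
    calc Rh1 r * ((ψ30/2)*r^3) ≤ Rh1 r * (2*Ψ r (Rh1 r) - Rh1 r) :=
          mul_le_mul_of_nonneg_left hA hR0.le
      _ = (Q r)^2 := hQeq
      _ ≤ (|q0|+1)^2*(r^(2*p-2)*r^6) := hQr.1
  -- crude bound for Rh2
  have hcr2 : ∀ᶠ r in 𝓝[>](0:ℝ), Rh2 r ≤ (2*(ψ30+1+M))*r^3 := by
    filter_upwards [hspec, keyΨ 1 one_pos, self_mem_nhdsWithin] with r hs hΨr hr0'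
    have hr0 : (0:ℝ) < r := hr0'
    obtain ⟨-, ⟨⟨hRm, hRr⟩, heq⟩⟩ := hs
    have hr3 : (0:ℝ) < r^3 := pow_pos hr0 3
    have hR0 : 0 < Rh2 r := lt_trans (mul_pos hψ30 hr3) hRm
    have hb := (abs_le.mp (hΨr (Rh2 r) hR0.le hRr)).2
    have h2 : Rh2 r * Rh2 r ≤ Rh2 r * (2*Ψ r (Rh2 r)) := by nlinarith [sq_nonneg (Q r)]
    have h3 : Rh2 r ≤ 2*Ψ r (Rh2 r) := (mul_le_mul_iff_right₀ hR0).mp h2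
    have h4 : M*(r^2*Rh2 r) ≤ M*r^3 :=
      mul_le_mul_of_nonneg_left (by nlinarith) hM0
    linarith
  -- uniform limit Ψ(r, Y r)/r³ → ψ30 for any function squeezed below C r³
  have T3 : ∀ (Y : ℝ → ℝ) (C : ℝ), 0 ≤ C → (∀ᶠ r in 𝓝[>](0:ℝ), 0 ≤ Y r ∧ Y r ≤ C*r^3) →
      Tendsto (fun r => Ψ r (Y r) / r^3) (𝓝[>](0:ℝ)) (𝓝 ψ30) := by
    intro Y C hC hY
    rw [Metric.tendsto_nhds]
    intro ε hε
    filter_upwards [keyΨ (ε/2) (by linarith), hY, evsm (M*C) (ε/2) (by linarith),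
      evsm C 1 one_pos, self_mem_nhdsWithin] with r h1 h2 h3 h4 hr0'
    have hr0 : (0:ℝ) < r := hr0'
    have hr3 : (0:ℝ) < r^3 := pow_pos hr0 3
    have hYr : Y r ≤ r := by nlinarith [h2.2, h4]
    rw [Real.dist_eq, show Ψ r (Y r)/r^3 - ψ30 = (Ψ r (Y r) - ψ30*r^3)/r^3 by
      field_simp, abs_div, abs_of_pos hr3, div_lt_iff₀ hr3]
    have hMY : M*(r^2*Y r) ≤ (M*C*r^2)*r^3 := by
      have := mul_le_mul_of_nonneg_left h2.2 (mul_nonneg hM0 (sq_nonneg r))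
      nlinarith
    calc |Ψ r (Y r) - ψ30*r^3| ≤ (ε/2)*r^3 + M*(r^2*Y r) := h1 (Y r) h2.1 hYr
      _ ≤ (ε/2)*r^3 + (M*C*r^2)*r^3 := add_le_add_right hMY _
      _ < ε*r^3 := by nlinarith [h3, hr3]
  -- limit of Q r / r^(2+p)
  have hQdiv : Tendsto (fun r => Q r / r^(2+p)) (𝓝[>](0:ℝ)) (𝓝 q0) := by
    have h0 := hQ.tendsto_div_nhds_zero
    have hcongr : ∀ᶠ r in 𝓝[>](0:ℝ),
        (Q r - q0*r^(2+p))/r^(2+p) + q0 = Q r / r^(2+p) := by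
      filter_upwards [self_mem_nhdsWithin] with r hr
      have hrp : (0:ℝ) < r^(2+p) := Real.rpow_pos_of_pos hr _
      field_simp
      ring
    have := (h0.add_const q0).congr' hcongr
    simpa using this
  have hQ2 : Tendsto (fun r => (Q r / r^(2+p))^2) (𝓝[>](0:ℝ)) (𝓝 (q0^2)) := by
    simpa using hQdiv.pow 2
  -- Rh1/r³ → 0
  have hR1r3 : Tendsto (fun r => Rh1 r / r^3) (𝓝[>](0:ℝ)) (𝓝 0) := by
    have hg : Tendsto (fun r : ℝ => (2*(|q0|+1)^2/ψ30)*r^(2*p-2)) (𝓝[>](0:ℝ)) (𝓝 0) := by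
      simpa using (T0 _ hp2).const_mul (2*(|q0|+1)^2/ψ30)
    refine squeeze_zero' ?_ ?_ hg
    · filter_upwards [hspec, self_mem_nhdsWithin] with r hs hr
      have hr3 : (0:ℝ) < r^3 := pow_pos (show (0:ℝ) < r from hr) 3
      exact div_nonneg hs.1.1.1.le hr3.le
    · filter_upwards [hcr1, self_mem_nhdsWithin] with r hc hr
      have hr0 : (0:ℝ) < r := hr
      have hr3 : (0:ℝ) < r^3 := pow_pos hr0 3
      rw [div_le_iff₀ hr3]
      calc Rh1 r ≤ (2*(|q0|+1)^2/ψ30)*(r^(2*p-2)*r^3) := hc.2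
        _ = (2*(|q0|+1)^2/ψ30)*r^(2*p-2)*r^3 := by ring
  -- limit of Rh1/r^(2p+1)
  have hT3a := T3 Rh1 ψ30 hψ30.le (hspec.mono fun r h => ⟨h.1.1.1.le, h.1.1.2.le⟩)
  have hBlim : Tendsto (fun r => 2*(Ψ r (Rh1 r)/r^3) - Rh1 r/r^3) (𝓝[>](0:ℝ))
      (𝓝 (2*ψ30)) := by
    have := ((hT3a.const_mul 2).sub hR1r3)
    simpa using this
  have hlim1 : Tendsto (fun r : ℝ => Rh1 r / r^(2*p+1)) (𝓝[>](0:ℝ))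
      (𝓝 (q0^2/(2*ψ30))) := by
    have hdiv := hQ2.div hBlim (by positivity)
    refine hdiv.congr' ?_
    filter_upwards [hspec, hcr1, self_mem_nhdsWithin] with r hs hc hr'
    have hr0 : (0:ℝ) < r := hr'
    have hr3 : (0:ℝ) < r^3 := pow_pos hr0 3
    have hD : 0 < 2*Ψ r (Rh1 r) - Rh1 r := lt_of_lt_of_le (by positivity) hc.1
    have hQeq : (Q r)^2 = Rh1 r * (2*Ψ r (Rh1 r) - Rh1 r) := by
      linear_combination hs.1.2
    have hrp : (0:ℝ) < r^(2+p) := Real.rpow_pos_of_pos hr0 _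
    have hr21 : (0:ℝ) < r^(2*p+1) := Real.rpow_pos_of_pos hr0 _
    have hpow : (r^(2+p))^2 = r^(2*p+1) * r^3 := by
      rw [sq, ← Real.rpow_add hr0,
        show (2+p)+(2+p) = (2*p+1) + ((3:ℕ):ℝ) by push_cast; ring,
        Real.rpow_add hr0, Real.rpow_natCast]
    have hcomb : 2*(Ψ r (Rh1 r)/r^3) - Rh1 r/r^3 = (2*Ψ r (Rh1 r) - Rh1 r)/r^3 := by
      ring
    simp only [Pi.div_apply]
    rw [hcomb, div_pow, hpow, hQeq]
    field_simp
  -- r^(2p+1)/Rh2 → 0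
  have hR2pos : ∀ᶠ r in 𝓝[>](0:ℝ), 0 < Rh2 r := by
    filter_upwards [hspec, self_mem_nhdsWithin] with r hs hr
    have hr0 : (0:ℝ) < r := hr
    exact lt_trans (mul_pos hψ30 (pow_pos hr0 3)) hs.2.1.1
  have htiny : Tendsto (fun r => r^(2*p+1)/Rh2 r) (𝓝[>](0:ℝ)) (𝓝 0) := by
    have hg : Tendsto (fun r : ℝ => (1/ψ30)*r^(2*p-2)) (𝓝[>](0:ℝ)) (𝓝 0) := by
      simpa using (T0 _ hp2).const_mul (1/ψ30)
    refine squeeze_zero' ?_ ?_ hg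
    · filter_upwards [hR2pos, self_mem_nhdsWithin] with r hR2 hr
      exact div_nonneg (Real.rpow_pos_of_pos hr _).le hR2.le
    · filter_upwards [hspec, hR2pos, self_mem_nhdsWithin] with r hs hR2 hr
      have hr0 : (0:ℝ) < r := hr
      have hrp2 : (0:ℝ) < r^(2*p-2) := Real.rpow_pos_of_pos hr0 _
      have hpow2 : r^(2*p+1) = r^(2*p-2) * r^3 := by
        rw [show (2*p+1) = (2*p-2)+((3:ℕ):ℝ) by push_cast; ring,
          Real.rpow_add hr0, Real.rpow_natCast]
      rw [div_le_iff₀ hR2]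
      calc r^(2*p+1) = (1/ψ30*r^(2*p-2))*(ψ30*r^3) := by
            rw [hpow2]; field_simp
        _ ≤ (1/ψ30*r^(2*p-2))*Rh2 r := by
            apply mul_le_mul_of_nonneg_left hs.2.1.1.le
            positivity
  -- limit of Rh2/r³
  have hT3b := T3 Rh2 (2*(ψ30+1+M)) (by positivity)
    (by
      filter_upwards [hspec, hcr2, self_mem_nhdsWithin] with r hs hc hr
      have hr0 : (0:ℝ) < r := hr
      exact ⟨(lt_trans (mul_pos hψ30 (pow_pos hr0 3)) hs.2.1.1).le, hc⟩)
  have hlim2 : Tendsto (fun r : ℝ => Rh2 r / r^3) (𝓝[>](0:ℝ)) (𝓝 (2*ψ30)) := by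
    have hcomb : Tendsto (fun r => 2*(Ψ r (Rh2 r)/r^3) - (Q r/r^(2+p))^2*(r^(2*p+1)/Rh2 r))
        (𝓝[>](0:ℝ)) (𝓝 (2*ψ30)) := by
      have := (hT3b.const_mul 2).sub (hQ2.mul htiny)
      simpa using this
    refine hcomb.congr' ?_
    filter_upwards [hspec, hR2pos, self_mem_nhdsWithin] with r hs hR2 hr
    have hr0 : (0:ℝ) < r := hr
    have hr3 : (0:ℝ) < r^3 := pow_pos hr0 3
    have hrp : (0:ℝ) < r^(2+p) := Real.rpow_pos_of_pos hr0 _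
    have hr21 : (0:ℝ) < r^(2*p+1) := Real.rpow_pos_of_pos hr0 _
    have hpow : (r^(2+p))^2 = r^(2*p+1) * r^3 := by
      rw [sq, ← Real.rpow_add hr0,
        show (2+p)+(2+p) = (2*p+1) + ((3:ℕ):ℝ) by push_cast; ring,
        Real.rpow_add hr0, Real.rpow_natCast]
    have heq2 := hs.2.2
    rw [div_pow, hpow]
    field_simp
    linear_combination (-1) * heq2
  -- final assembly
  obtain ⟨ε, hε, hsub⟩ := mem_nhdsGT_iff_exists_Ioo_subset.mp hspec
  refine ⟨ε, hε, Rh1, Rh2, fun r hr => ?_, hlim1, hlim2⟩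
  obtain ⟨h1, h2⟩ := hsub hr
  exact ⟨h1.1.1, lt_trans h1.1.2 h2.1.1, h2.1.2, h1.2, h2.2⟩
end

section
/- Assume Ψ(r,R) = ψ₃₀r³ + ψ₂₁r²R + ψ₁₂rR² + ψ₀₃R³ + o((|r|+|R|)³) as (r,R)→(0,0) with Ψ continuous, and Q(r) = q₀r³ + o(r³) as r→0⁺, with 0 < |q₀| < ψ₃₀. Then there exist ε > 0 and functions R_{h1}, R_{h2} : (0,ε) → ℝ with 0 < R_{h1}(r) < R_{h2}(r) ≤ r, such that for i = 1,2 and all r ∈ (0,ε), R_{hi}(r)² − 2Ψ(r,R_{hi}(r))·R_{hi}(r) + Q(r)² = 0, and moreover lim_{r→0⁺} R_{h1}(r)/r³ = ψ₃₀ − √(ψ₃₀² − q₀²) and lim_{r→0⁺} R_{h2}(r)/r³ = ψ₃₀ + √(ψ₃₀² − q₀²). -/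
open Filter Topology Asymptotics

lemma csInf_root_mem (f : ℝ → ℝ) (hf : Continuous f) (lo hi : ℝ)
    (hroot : ∃ x ∈ Set.Icc lo hi, f x = 0) :
    sInf (Set.Icc lo hi ∩ {R | f R = 0}) ∈ Set.Icc lo hi ∩ {R | f R = 0} := by
  obtain ⟨x, hx, hfx⟩ := hroot
  refine IsClosed.csInf_mem ?_ ⟨x, hx, hfx⟩ ⟨lo, fun y hy => hy.1.1⟩
  exact isClosed_Icc.inter (isClosed_eq hf continuous_const)

set_option maxHeartbeats 1000000 in
/-- Case `p = 1`, `|q₀| < ψ₃₀`: two apparent-horizon branches solving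
`R² - 2Ψ(r,R)R + Q(r)² = 0`, with `R_{hi}(r) ~ (ψ₃₀ ∓ √(ψ₃₀² - q₀²))r³`. -/
theorem horizons_p_eq_one
    (Ψ : ℝ → ℝ → ℝ) (Q : ℝ → ℝ) (ψ30 ψ21 ψ12 ψ03 q0 : ℝ)
    (hq0 : 0 < |q0|) (hlt : |q0| < ψ30)
    (hΨcont : Continuous (fun q : ℝ × ℝ => Ψ q.1 q.2))
    (hΨ : (fun q : ℝ × ℝ =>
        Ψ q.1 q.2 - (ψ30*q.1^3 + ψ21*q.1^2*q.2 + ψ12*q.1*q.2^2 + ψ03*q.2^3))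
      =o[nhds ((0:ℝ), (0:ℝ))] fun q : ℝ × ℝ => (|q.1| + |q.2|)^3)
    (hQ : (fun r : ℝ => Q r - q0 * r^3) =o[𝓝[>] (0:ℝ)] fun r : ℝ => r^3) :
    ∃ ε > 0, ∃ Rh1 Rh2 : ℝ → ℝ,
      (∀ r ∈ Set.Ioo (0:ℝ) ε,
        0 < Rh1 r ∧ Rh1 r < Rh2 r ∧ Rh2 r ≤ r ∧
        (Rh1 r)^2 - 2 * Ψ r (Rh1 r) * Rh1 r + (Q r)^2 = 0 ∧
        (Rh2 r)^2 - 2 * Ψ r (Rh2 r) * Rh2 r + (Q r)^2 = 0) ∧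
      Tendsto (fun r : ℝ => Rh1 r / r^3) (𝓝[>] (0:ℝ))
        (𝓝 (ψ30 - Real.sqrt (ψ30^2 - q0^2))) ∧
      Tendsto (fun r : ℝ => Rh2 r / r^3) (𝓝[>] (0:ℝ))
        (𝓝 (ψ30 + Real.sqrt (ψ30^2 - q0^2))) := by
  have hψ0 : 0 < ψ30 := lt_trans hq0 hlt
  have hq2 : q0^2 < ψ30^2 := by nlinarith [sq_abs q0, abs_nonneg q0]
  obtain ⟨s, hsdef⟩ : ∃ x : ℝ, x = Real.sqrt (ψ30^2 - q0^2) := ⟨_, rfl⟩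
  have hs2 : s^2 = ψ30^2 - q0^2 := by rw [hsdef]; exact Real.sq_sqrt (by linarith)
  have hs0 : 0 < s := by rw [hsdef]; exact Real.sqrt_pos.mpr (by linarith)
  have hq0ne : q0 ≠ 0 := abs_pos.mp hq0
  have hq0' : 0 < q0^2 := by positivity
  have hsψ : s < ψ30 := by nlinarith
  obtain ⟨a, ha⟩ : ∃ x : ℝ, x = ψ30 - s := ⟨_, rfl⟩
  obtain ⟨b, hb⟩ : ∃ x : ℝ, x = ψ30 + s := ⟨_, rfl⟩
  obtain ⟨δ, hδ⟩ : ∃ x : ℝ, x = (ψ30 - s)/2 := ⟨_, rfl⟩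
  obtain ⟨B, hB⟩ : ∃ x : ℝ, x = ψ30 + s + 1 := ⟨_, rfl⟩
  have ha0 : 0 < a := by rw [ha]; linarith
  have hδ0 : 0 < δ := by rw [hδ]; linarith
  have hδa : δ < a := by rw [hδ, ha]; linarith
  have haψ : a < ψ30 := by rw [ha]; linarith
  have hψb : ψ30 < b := by rw [hb]; linarith
  have hbB : b < B := by rw [hb, hB]; linarith
  have hB1 : 1 < B := by rw [hB]; linarith
  have hδB : δ ≤ B := by linarith
  have hψB : ψ30 < B := by linarith
  -- continuity of the slice function
  have hfc : ∀ r : ℝ, Continuous fun R : ℝ => R^2 - 2*Ψ r R*R + (Q r)^2 := by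
    intro r
    have h1 : Continuous fun R : ℝ => Ψ r R :=
      hΨcont.comp (continuous_const.prodMk continuous_id)
    continuity
  -- the key uniform estimate
  have keyA : ∀ γ : ℝ, 0 < γ → ∀ᶠ r in 𝓝[>] (0:ℝ), 0 < r ∧ B*r^2 ≤ 1 ∧
      ∀ c ∈ Set.Icc δ B, |(c*r^3)^2 - 2*Ψ r (c*r^3)*(c*r^3) + (Q r)^2
        - (c^2 - 2*ψ30*c + q0^2)*r^6| ≤ γ*r^6 := by
    intro γ hγ
    have hB0 : (0:ℝ) < B := by linarith
    have h1B : (0:ℝ) < 1+B := by linarith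
    obtain ⟨C, hCdef⟩ : ∃ x : ℝ, x = (|ψ21|)*B + (|ψ12|)*B^2 + (|ψ03|)*B^3 := ⟨_, rfl⟩
    have hC0 : 0 ≤ C := by
      have h1 : 0 ≤ (|ψ21|)*B := mul_nonneg (abs_nonneg _) hB0.le
      have h2 : 0 ≤ (|ψ12|)*B^2 := mul_nonneg (abs_nonneg _) (by positivity)
      have h3 : 0 ≤ (|ψ03|)*B^3 := mul_nonneg (abs_nonneg _) (pow_nonneg hB0.le 3)
      rw [hCdef]; linarith
    have hden : (0:ℝ) < 6*B*(1+B)^3 := mul_pos (by linarith) (pow_pos h1B 3)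
    obtain ⟨ε1, hε1⟩ : ∃ x : ℝ, x = γ/(6*B*(1+B)^3) := ⟨_, rfl⟩
    have hε1pos : 0 < ε1 := by rw [hε1]; exact div_pos hγ hden
    have hΨ' := hΨ.def hε1pos
    rw [Metric.eventually_nhds_iff] at hΨ'
    obtain ⟨ρ, hρ0, hball⟩ := hΨ'
    have hden2 : (0:ℝ) < 3*(1+2*|q0|) := by linarith [abs_nonneg q0]
    obtain ⟨ε2, hε2⟩ : ∃ x : ℝ, x = min 1 (γ/(3*(1+2*(|q0|)))) := ⟨_, rfl⟩
    have hε2pos : 0 < ε2 := by rw [hε2]; exact lt_min one_pos (div_pos hγ hden2)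
    have hQ' := hQ.def hε2pos
    have hden3 : (0:ℝ) < 6*B*C+1 := by
      have h1 : (0:ℝ) ≤ 6*B*C := mul_nonneg (by linarith) hC0
      linarith
    obtain ⟨t, htdef⟩ : ∃ x : ℝ, x = min (min (ρ/B) 1) (min (Real.sqrt (γ/(6*B*C+1))) (Real.sqrt (1/B))) := ⟨_, rfl⟩
    have ht0 : 0 < t := by
      rw [htdef]
      refine lt_min (lt_min (div_pos hρ0 hB0) one_pos) (lt_min ?_ ?_)
      · exact Real.sqrt_pos.mpr (div_pos hγ hden3)
      · exact Real.sqrt_pos.mpr (div_pos one_pos hB0)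
    have hIoo : ∀ᶠ r in 𝓝[>] (0:ℝ), r ∈ Set.Ioo 0 t :=
      Ioo_mem_nhdsGT_of_mem ⟨le_refl 0, ht0⟩
    filter_upwards [hIoo, hQ'] with r hrI hQr
    obtain ⟨hr0, hrt⟩ := hrI
    rw [htdef] at hrt
    have hr3 : (0:ℝ) < r^3 := by positivity
    have hr1 : r < 1 := lt_of_lt_of_le hrt
      (le_trans (min_le_left _ _) (min_le_right _ _))
    have hrρ : B*r < ρ := by
      have h := lt_of_lt_of_le hrt (le_trans (min_le_left _ _) (min_le_left _ _))
      rw [lt_div_iff₀ hB0] at h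
      linarith
    have hr2 : r^2 < γ/(6*B*C+1) := by
      have h := lt_of_lt_of_le hrt (le_trans (min_le_right _ _) (min_le_left _ _))
      exact (Real.lt_sqrt hr0.le).mp h
    have hrB2 : B*r^2 ≤ 1 := by
      have h := lt_of_lt_of_le hrt (le_trans (min_le_right _ _) (min_le_right _ _))
      have h2 := (Real.lt_sqrt hr0.le).mp h
      rw [lt_div_iff₀ hB0] at h2
      linarith
    have hQb : |Q r - q0*r^3| ≤ ε2*r^3 := by
      simpa [Real.norm_eq_abs, abs_of_pos hr0] using hQr
    refine ⟨hr0, hrB2, ?_⟩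
    intro c hc
    obtain ⟨hcδ, hcB⟩ := hc
    have hc0 : 0 < c := lt_of_lt_of_le hδ0 hcδ
    have hr21 : r^2 ≤ 1 := by rw [pow_two]; exact mul_le_one₀ hr1.le hr0.le hr1.le
    have hr31 : r^3 ≤ r := by
      linarith only [mul_le_of_le_one_right hr0.le hr21,
        (by ring : r * r^2 = r^3)]
    have hcr3B : c*r^3 ≤ B*r^3 := mul_le_mul_of_nonneg_right hcB hr3.le
    have hcr3 : c*r^3 ≤ B*r :=
      le_trans hcr3B (mul_le_mul_of_nonneg_left hr31 hB0.le)
    have hcr3' : 0 < c*r^3 := by positivity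
    have hdist : dist ((r, c*r^3) : ℝ × ℝ) ((0:ℝ),(0:ℝ)) < ρ := by
      rw [Prod.dist_eq]
      simp only [dist_zero_right, Real.norm_eq_abs]
      rw [max_lt_iff]
      have hrBr : r < B*r := by
        have h := mul_lt_mul_of_pos_right hB1 hr0
        linarith only [h]
      refine ⟨by rw [abs_of_pos hr0]; linarith only [hrBr, hrρ],
        by rw [abs_of_pos hcr3']; linarith only [hcr3, hrρ]⟩
    have hE := hball hdist
    simp only [Real.norm_eq_abs] at hE
    have habs3 : |(|r| + |c*r^3|)^3| ≤ ((1+B)*r)^3 := by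
      rw [abs_of_nonneg (by positivity)]
      have hsum : |r| + |c*r^3| ≤ (1+B)*r := by
        rw [abs_of_pos hr0, abs_of_pos hcr3']; linarith only [hcr3]
      exact pow_le_pow_left₀ (by positivity) hsum 3
    have hEb : |Ψ r (c*r^3) - (ψ30*r^3 + ψ21*r^2*(c*r^3) + ψ12*r*(c*r^3)^2
        + ψ03*(c*r^3)^3)| ≤ ε1*(1+B)^3*r^3 := by
      calc |Ψ r (c*r^3) - (ψ30*r^3 + ψ21*r^2*(c*r^3) + ψ12*r*(c*r^3)^2
          + ψ03*(c*r^3)^3)| ≤ ε1 * |(|r| + |c*r^3|)^3| := hE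
      _ ≤ ε1 * ((1+B)*r)^3 := mul_le_mul_of_nonneg_left habs3 hε1pos.le
      _ = ε1*(1+B)^3*r^3 := by ring
    -- bounds on powers
    have h75 : r^7 ≤ r^5 := by
      linarith only [mul_le_of_le_one_right (pow_pos hr0 5).le hr21,
        (by ring : r^5 * r^2 = r^7)]
    have h95 : r^9 ≤ r^5 := by
      linarith only [h75, mul_le_of_le_one_right (pow_pos hr0 7).le hr21,
        (by ring : r^7 * r^2 = r^9)]
    have hcB2 : c^2 ≤ B^2 := pow_le_pow_left₀ hc0.le hcB 2
    have hcB3 : c^3 ≤ B^3 := pow_le_pow_left₀ hc0.le hcB 3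
    have hr5 : (0:ℝ) < r^5 := by positivity
    have htail : |ψ21*c*r^5 + ψ12*c^2*r^7 + ψ03*c^3*r^9| ≤ C*r^5 := by
      have h1 : |ψ21*c*r^5| ≤ (|ψ21|)*B*r^5 := by
        rw [abs_mul, abs_mul, abs_of_pos hc0, abs_of_pos hr5]
        exact mul_le_mul_of_nonneg_right
          (mul_le_mul_of_nonneg_left hcB (abs_nonneg _)) hr5.le
      have h2 : |ψ12*c^2*r^7| ≤ (|ψ12|)*B^2*r^5 := by
        rw [abs_mul, abs_mul, abs_of_pos (by positivity : (0:ℝ) < c^2),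
          abs_of_pos (by positivity : (0:ℝ) < r^7)]
        refine le_trans (mul_le_mul_of_nonneg_right
          (mul_le_mul_of_nonneg_left hcB2 (abs_nonneg _)) (by positivity)) ?_
        exact mul_le_mul_of_nonneg_left h75 (by positivity)
      have h3 : |ψ03*c^3*r^9| ≤ (|ψ03|)*B^3*r^5 := by
        rw [abs_mul, abs_mul, abs_of_pos (by positivity : (0:ℝ) < c^3),
          abs_of_pos (by positivity : (0:ℝ) < r^9)]
        refine le_trans (mul_le_mul_of_nonneg_right
          (mul_le_mul_of_nonneg_left hcB3 (abs_nonneg _)) (by positivity)) ?_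
        exact mul_le_mul_of_nonneg_left h95
          (mul_nonneg (abs_nonneg _) (pow_nonneg hB0.le 3))
      calc |ψ21*c*r^5 + ψ12*c^2*r^7 + ψ03*c^3*r^9|
          ≤ |ψ21*c*r^5 + ψ12*c^2*r^7| + |ψ03*c^3*r^9| := abs_add_le _ _
        _ ≤ |ψ21*c*r^5| + |ψ12*c^2*r^7| + |ψ03*c^3*r^9| := by
            linarith [abs_add_le (ψ21*c*r^5) (ψ12*c^2*r^7)]
        _ ≤ C*r^5 := by rw [hCdef]; linarith
    have hε1e : 6*B*(1+B)^3*ε1 = γ := by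
      rw [hε1]; field_simp
    have hT1 : |(-2*(c*r^3)) * (Ψ r (c*r^3) - (ψ30*r^3 + ψ21*r^2*(c*r^3)
        + ψ12*r*(c*r^3)^2 + ψ03*(c*r^3)^3))| ≤ γ/3*r^6 := by
      rw [abs_mul, abs_of_nonpos (by linarith only [hcr3'] : -2*(c*r^3) ≤ 0)]
      calc -(-2*(c*r^3)) * |Ψ r (c*r^3) - (ψ30*r^3 + ψ21*r^2*(c*r^3)
          + ψ12*r*(c*r^3)^2 + ψ03*(c*r^3)^3)|
          = 2*(c*r^3) * |Ψ r (c*r^3) - (ψ30*r^3 + ψ21*r^2*(c*r^3)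
          + ψ12*r*(c*r^3)^2 + ψ03*(c*r^3)^3)| := by ring
        _ ≤ 2*(B*r^3) * (ε1*(1+B)^3*r^3) := by
            refine mul_le_mul (by linarith only [hcr3B]) hEb (abs_nonneg _) (by positivity)
        _ = (6*B*(1+B)^3*ε1)*r^6/3 := by ring
        _ = γ*r^6/3 := by rw [hε1e]
        _ = γ/3*r^6 := by ring
    have hr2' : (6*B*C+1)*r^2 ≤ γ := by
      rw [lt_div_iff₀ hden3] at hr2
      linarith
    have hT2 : |(-2*(c*r^3)) * (ψ21*c*r^5 + ψ12*c^2*r^7 + ψ03*c^3*r^9)| ≤ γ/3*r^6 := by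
      rw [abs_mul, abs_of_nonpos (by linarith only [hcr3'] : -2*(c*r^3) ≤ 0)]
      calc -(-2*(c*r^3)) * |ψ21*c*r^5 + ψ12*c^2*r^7 + ψ03*c^3*r^9|
          = 2*(c*r^3) * |ψ21*c*r^5 + ψ12*c^2*r^7 + ψ03*c^3*r^9| := by ring
        _ ≤ 2*(B*r^3) * (C*r^5) := by
            refine mul_le_mul (by linarith only [hcr3B]) htail (abs_nonneg _) (by positivity)
        _ ≤ γ/3*r^6 := by
            linarith only [mul_le_mul_of_nonneg_right hr2' (pow_pos hr0 6).le,
              pow_nonneg hr0.le 8,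
              mul_nonneg (mul_nonneg hB0.le hC0) (pow_nonneg hr0.le 8),
              (by ring : (6*B*C+1)*r^2*r^6 = 6*(B*C*r^8) + r^8)]
    have hsumQ : |Q r + q0*r^3| ≤ ε2*r^3 + 2*(|q0|)*r^3 := by
      have hrw : Q r + q0*r^3 = (Q r - q0*r^3) + 2*(q0*r^3) := by ring
      rw [hrw]
      refine le_trans (abs_add_le _ _) ?_
      have h2 : |2*(q0*r^3)| = 2*(|q0|)*r^3 := by
        rw [abs_mul, abs_mul, abs_two, abs_of_pos hr3]; ring
      rw [h2]
      linarith [hQb]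
    have hT3 : |(Q r - q0*r^3)*(Q r + q0*r^3)| ≤ γ/3*r^6 := by
      rw [abs_mul]
      have hε2a : ε2 ≤ 1 := by rw [hε2]; exact min_le_left _ _
      have hε2b : ε2 ≤ γ/(3*(1+2*(|q0|))) := by rw [hε2]; exact min_le_right _ _
      have h3 : ε2*(3*(1+2*(|q0|))) ≤ γ := by
        rw [le_div_iff₀ hden2] at hε2b
        linarith
      calc |Q r - q0*r^3| * |Q r + q0*r^3|
          ≤ (ε2*r^3)*(ε2*r^3 + 2*(|q0|)*r^3) :=
            mul_le_mul hQb hsumQ (abs_nonneg _) (by positivity)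
        _ = ε2*(ε2+2*(|q0|))*r^6 := by ring
        _ ≤ γ/3*r^6 := by
            linarith only [mul_le_mul_of_nonneg_right h3 (pow_pos hr0 6).le,
              mul_le_mul_of_nonneg_right
                (mul_le_mul_of_nonneg_left hε2a hε2pos.le) (pow_pos hr0 6).le,
              mul_nonneg (mul_nonneg hε2pos.le (abs_nonneg q0)) (pow_pos hr0 6).le]
    have hid : (c*r^3)^2 - 2*Ψ r (c*r^3)*(c*r^3) + (Q r)^2 - (c^2 - 2*ψ30*c + q0^2)*r^6
        = (-2*(c*r^3)) * (Ψ r (c*r^3) - (ψ30*r^3 + ψ21*r^2*(c*r^3)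
            + ψ12*r*(c*r^3)^2 + ψ03*(c*r^3)^3))
          + (-2*(c*r^3)) * (ψ21*c*r^5 + ψ12*c^2*r^7 + ψ03*c^3*r^9)
          + (Q r - q0*r^3)*(Q r + q0*r^3) := by ring
    rw [hid]
    calc |(-2*(c*r^3)) * (Ψ r (c*r^3) - (ψ30*r^3 + ψ21*r^2*(c*r^3)
            + ψ12*r*(c*r^3)^2 + ψ03*(c*r^3)^3))
          + (-2*(c*r^3)) * (ψ21*c*r^5 + ψ12*c^2*r^7 + ψ03*c^3*r^9)
          + (Q r - q0*r^3)*(Q r + q0*r^3)|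
        ≤ |(-2*(c*r^3)) * (Ψ r (c*r^3) - (ψ30*r^3 + ψ21*r^2*(c*r^3)
            + ψ12*r*(c*r^3)^2 + ψ03*(c*r^3)^3))
          + (-2*(c*r^3)) * (ψ21*c*r^5 + ψ12*c^2*r^7 + ψ03*c^3*r^9)|
          + |(Q r - q0*r^3)*(Q r + q0*r^3)| := abs_add_le _ _
      _ ≤ γ/3*r^6 + γ/3*r^6 + γ/3*r^6 := by
          have := abs_add_le ((-2*(c*r^3)) * (Ψ r (c*r^3) - (ψ30*r^3 + ψ21*r^2*(c*r^3)
            + ψ12*r*(c*r^3)^2 + ψ03*(c*r^3)^3)))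
            ((-2*(c*r^3)) * (ψ21*c*r^5 + ψ12*c^2*r^7 + ψ03*c^3*r^9))
          linarith [hT1, hT2, hT3]
      _ = γ*r^6 := by ring
  -- definitions of the two branches
  obtain ⟨Rh1, hRh1⟩ : ∃ f : ℝ → ℝ, f = fun r =>
      sInf (Set.Icc (δ*r^3) (ψ30*r^3) ∩ {R | R^2 - 2*Ψ r R*R + (Q r)^2 = 0}) := ⟨_, rfl⟩
  obtain ⟨Rh2, hRh2⟩ : ∃ f : ℝ → ℝ, f = fun r =>
      sInf (Set.Icc (ψ30*r^3) (B*r^3) ∩ {R | R^2 - 2*Ψ r R*R + (Q r)^2 = 0}) := ⟨_, rfl⟩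
  -- slice analysis
  have slice : ∀ γ : ℝ, 0 < γ → γ < δ*(b-δ) → γ < s^2 → γ < 2*s+1 →
      ∀ r : ℝ, 0 < r → B*r^2 ≤ 1 →
      (∀ c ∈ Set.Icc δ B, |(c*r^3)^2 - 2*Ψ r (c*r^3)*(c*r^3) + (Q r)^2
        - (c^2 - 2*ψ30*c + q0^2)*r^6| ≤ γ*r^6) →
      (0 < Rh1 r ∧ Rh1 r < Rh2 r ∧ Rh2 r ≤ r ∧
        (Rh1 r)^2 - 2 * Ψ r (Rh1 r) * Rh1 r + (Q r)^2 = 0 ∧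
        (Rh2 r)^2 - 2 * Ψ r (Rh2 r) * Rh2 r + (Q r)^2 = 0) ∧
      |Rh1 r / r^3 - a| ≤ γ/s ∧ |Rh2 r / r^3 - b| ≤ γ/s := by
    intro γ hγpos hγ1 hγ2 hγ3 r hr0 hrB H
    have hr3 : (0:ℝ) < r^3 := by positivity
    have hr6 : (0:ℝ) < r^6 := by positivity
    have hδmem : δ ∈ Set.Icc δ B := ⟨le_rfl, hδB⟩
    have hψmem : ψ30 ∈ Set.Icc δ B := ⟨by linarith, hψB.le⟩
    have hBmem : B ∈ Set.Icc δ B := ⟨hδB, le_rfl⟩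
    have hgδ : δ^2 - 2*ψ30*δ + q0^2 = δ*(b-δ) := by
      rw [hδ, hb]; linear_combination hs2
    have hgψ : ψ30^2 - 2*ψ30*ψ30 + q0^2 = -(s^2) := by linear_combination hs2
    have hgB : B^2 - 2*ψ30*B + q0^2 = 2*s+1 := by
      rw [hB]; linear_combination hs2
    have hfδ : 0 < (δ*r^3)^2 - 2*Ψ r (δ*r^3)*(δ*r^3) + (Q r)^2 := by
      have h := H δ hδmem
      rw [hgδ, abs_le] at h
      linarith only [h.1, mul_pos (show (0:ℝ) < δ*(b-δ) - γ by linarith) hr6]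
    have hfψ : (ψ30*r^3)^2 - 2*Ψ r (ψ30*r^3)*(ψ30*r^3) + (Q r)^2 < 0 := by
      have h := H ψ30 hψmem
      rw [hgψ, abs_le] at h
      linarith only [h.2, mul_pos (show (0:ℝ) < s^2 - γ by linarith) hr6]
    have hfB : 0 < (B*r^3)^2 - 2*Ψ r (B*r^3)*(B*r^3) + (Q r)^2 := by
      have h := H B hBmem
      rw [hgB, abs_le] at h
      linarith only [h.1, mul_pos (show (0:ℝ) < 2*s+1 - γ by linarith) hr6]
    have hle1 : δ*r^3 ≤ ψ30*r^3 :=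
      mul_le_mul_of_nonneg_right (by linarith only [hδa, haψ]) hr3.le
    have hle2 : ψ30*r^3 ≤ B*r^3 :=
      mul_le_mul_of_nonneg_right (by linarith only [hψB]) hr3.le
    obtain ⟨x1, hx1, hfx1⟩ := intermediate_value_Icc' hle1 (hfc r).continuousOn
      ⟨hfψ.le, hfδ.le⟩
    obtain ⟨x2, hx2, hfx2⟩ := intermediate_value_Icc hle2 (hfc r).continuousOn
      ⟨hfψ.le, hfB.le⟩
    have hmem1 : Rh1 r ∈ Set.Icc (δ*r^3) (ψ30*r^3)
        ∩ {R | R^2 - 2*Ψ r R*R + (Q r)^2 = 0} := by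
      rw [hRh1]
      exact csInf_root_mem _ (hfc r) _ _ ⟨x1, hx1, hfx1⟩
    have hmem2 : Rh2 r ∈ Set.Icc (ψ30*r^3) (B*r^3)
        ∩ {R | R^2 - 2*Ψ r R*R + (Q r)^2 = 0} := by
      rw [hRh2]
      exact csInf_root_mem _ (hfc r) _ _ ⟨x2, hx2, hfx2⟩
    obtain ⟨hIcc1, hroot1⟩ := hmem1
    obtain ⟨hIcc2, hroot2⟩ := hmem2
    have hroot1' : (Rh1 r)^2 - 2*Ψ r (Rh1 r)*(Rh1 r) + (Q r)^2 = 0 := hroot1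
    have hroot2' : (Rh2 r)^2 - 2*Ψ r (Rh2 r)*(Rh2 r) + (Q r)^2 = 0 := hroot2
    have hpos1 : 0 < Rh1 r := lt_of_lt_of_le (by positivity) hIcc1.1
    have hR2gt : ψ30*r^3 < Rh2 r := by
      rcases lt_or_eq_of_le hIcc2.1 with h | h
      · exact h
      · exfalso; rw [← h] at hroot2'; rw [hroot2'] at hfψ; exact lt_irrefl 0 hfψ
    have hlt12 : Rh1 r < Rh2 r := lt_of_le_of_lt hIcc1.2 hR2gt
    have hR2r : Rh2 r ≤ r := by
      refine le_trans hIcc2.2 ?_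
      linarith only [mul_le_mul_of_nonneg_right hrB hr0.le]
    -- asymptotics for Rh1
    have hccψ : Rh1 r / r^3 ≤ ψ30 := by rw [div_le_iff₀ hr3]; exact hIcc1.2
    have hccδ : δ ≤ Rh1 r / r^3 := by rw [le_div_iff₀ hr3]; exact hIcc1.1
    have hccmul1 : (Rh1 r / r^3) * r^3 = Rh1 r := div_mul_cancel₀ _ (ne_of_gt hr3)
    have hH1 := H (Rh1 r / r^3) ⟨hccδ, le_trans hccψ (le_of_lt hψB)⟩
    rw [hccmul1, hroot1', zero_sub, abs_neg, abs_mul, abs_of_pos hr6] at hH1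
    have hg1 : |(Rh1 r / r^3)^2 - 2*ψ30*(Rh1 r / r^3) + q0^2| ≤ γ :=
      le_of_mul_le_mul_right hH1 hr6
    have heq1 : (Rh1 r / r^3)^2 - 2*ψ30*(Rh1 r / r^3) + q0^2
        = ((Rh1 r / r^3) - a) * ((Rh1 r / r^3) - b) := by
      rw [ha, hb]; linear_combination hs2
    rw [heq1, abs_mul] at hg1
    have hblow1 : s ≤ |Rh1 r / r^3 - b| := by
      rw [abs_sub_comm, abs_of_nonneg (sub_nonneg.mpr (le_trans hccψ (le_of_lt hψb)))]
      linarith only [hccψ, hb]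
    have hfinal1 : |Rh1 r / r^3 - a| ≤ γ/s := by
      rw [le_div_iff₀ hs0]
      calc |Rh1 r / r^3 - a| * s ≤ |Rh1 r / r^3 - a| * |Rh1 r / r^3 - b| :=
        mul_le_mul_of_nonneg_left hblow1 (abs_nonneg _)
      _ ≤ γ := hg1
    -- asymptotics for Rh2
    have hcc2ψ : ψ30 ≤ Rh2 r / r^3 := by rw [le_div_iff₀ hr3]; exact hIcc2.1
    have hcc2B : Rh2 r / r^3 ≤ B := by rw [div_le_iff₀ hr3]; exact hIcc2.2
    have hccmul2 : (Rh2 r / r^3) * r^3 = Rh2 r := div_mul_cancel₀ _ (ne_of_gt hr3)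
    have hH2 := H (Rh2 r / r^3) ⟨by linarith only [hcc2ψ, hδa, haψ], hcc2B⟩
    rw [hccmul2, hroot2', zero_sub, abs_neg, abs_mul, abs_of_pos hr6] at hH2
    have hg2 : |(Rh2 r / r^3)^2 - 2*ψ30*(Rh2 r / r^3) + q0^2| ≤ γ :=
      le_of_mul_le_mul_right hH2 hr6
    have heq2 : (Rh2 r / r^3)^2 - 2*ψ30*(Rh2 r / r^3) + q0^2
        = ((Rh2 r / r^3) - a) * ((Rh2 r / r^3) - b) := by
      rw [ha, hb]; linear_combination hs2
    rw [heq2, abs_mul] at hg2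
    have hblow2 : s ≤ |Rh2 r / r^3 - a| := by
      rw [abs_of_nonneg (sub_nonneg.mpr (le_trans (le_of_lt haψ) hcc2ψ))]
      linarith only [hcc2ψ, ha]
    have hfinal2 : |Rh2 r / r^3 - b| ≤ γ/s := by
      rw [le_div_iff₀ hs0]
      calc |Rh2 r / r^3 - b| * s ≤ |Rh2 r / r^3 - b| * |Rh2 r / r^3 - a| :=
        mul_le_mul_of_nonneg_left hblow2 (abs_nonneg _)
      _ ≤ γ := by rw [mul_comm]; exact hg2
    exact ⟨⟨hpos1, hlt12, hR2r, hroot1', hroot2'⟩, hfinal1, hfinal2⟩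
  -- choose the base tolerance
  obtain ⟨γ0, hγ0def⟩ : ∃ x : ℝ, x = min (min (δ*(b-δ)) (s^2)) (2*s+1) / 2 := ⟨_, rfl⟩
  have hδbδ : 0 < δ*(b-δ) := by
    have : δ < b := by linarith
    nlinarith
  have hγ00 : 0 < γ0 := by
    rw [hγ0def]
    have h1 : 0 < min (min (δ*(b-δ)) (s^2)) (2*s+1) := by
      refine lt_min (lt_min hδbδ (by positivity)) (by linarith)
    linarith
  have hγ0a : ∀ γ : ℝ, γ ≤ γ0 → γ < δ*(b-δ) ∧ γ < s^2 ∧ γ < 2*s+1 := by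
    intro γ hγ
    have h1 : min (min (δ*(b-δ)) (s^2)) (2*s+1) ≤ δ*(b-δ) :=
      le_trans (min_le_left _ _) (min_le_left _ _)
    have h2 : min (min (δ*(b-δ)) (s^2)) (2*s+1) ≤ s^2 :=
      le_trans (min_le_left _ _) (min_le_right _ _)
    have h3 : min (min (δ*(b-δ)) (s^2)) (2*s+1) ≤ 2*s+1 := min_le_right _ _
    have h0 : 0 < min (min (δ*(b-δ)) (s^2)) (2*s+1) := by
      refine lt_min (lt_min hδbδ (by positivity)) (by linarith)
    refine ⟨by rw [hγ0def] at hγ; linarith, by rw [hγ0def] at hγ; linarith,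
      by rw [hγ0def] at hγ; linarith⟩
  -- extract ε from the eventual statement with γ0
  have hev := keyA γ0 hγ00
  rw [eventually_iff, mem_nhdsGT_iff_exists_Ioo_subset] at hev
  obtain ⟨u, hu, hsub⟩ := hev
  refine ⟨u, hu, Rh1, Rh2, ?_, ?_, ?_⟩
  · intro r hr
    have hP := hsub hr
    obtain ⟨γ1, γ2, γ3⟩ := hγ0a γ0 le_rfl
    exact (slice γ0 hγ00 γ1 γ2 γ3 r hP.1 hP.2.1 hP.2.2).1
  · rw [Metric.tendsto_nhds]
    intro η hη
    obtain ⟨γ, hγdef⟩ : ∃ x : ℝ, x = min γ0 (s*η/2) := ⟨_, rfl⟩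
    have hγpos : 0 < γ := by rw [hγdef]; exact lt_min hγ00 (by positivity)
    obtain ⟨γ1, γ2, γ3⟩ := hγ0a γ (le_of_eq_of_le hγdef (min_le_left _ _))
    filter_upwards [keyA γ hγpos] with r hP
    have hsl := (slice γ hγpos γ1 γ2 γ3 r hP.1 hP.2.1 hP.2.2).2.1
    rw [Real.dist_eq]
    have hle : γ ≤ s*η/2 := le_of_eq_of_le hγdef (min_le_right _ _)
    have h2 : γ/s ≤ η/2 := by
      rw [div_le_iff₀ hs0]
      nlinarith only [hle]
    calc |Rh1 r / r^3 - (ψ30 - Real.sqrt (ψ30^2 - q0^2))|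
        = |Rh1 r / r^3 - a| := by rw [ha, hsdef]
      _ ≤ γ/s := hsl
      _ < η := by linarith only [h2, hη]
  · rw [Metric.tendsto_nhds]
    intro η hη
    obtain ⟨γ, hγdef⟩ : ∃ x : ℝ, x = min γ0 (s*η/2) := ⟨_, rfl⟩
    have hγpos : 0 < γ := by rw [hγdef]; exact lt_min hγ00 (by positivity)
    obtain ⟨γ1, γ2, γ3⟩ := hγ0a γ (le_of_eq_of_le hγdef (min_le_left _ _))
    filter_upwards [keyA γ hγpos] with r hP
    have hsl := (slice γ hγpos γ1 γ2 γ3 r hP.1 hP.2.1 hP.2.2).2.2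
    rw [Real.dist_eq]
    have hle : γ ≤ s*η/2 := le_of_eq_of_le hγdef (min_le_right _ _)
    have h2 : γ/s ≤ η/2 := by
      rw [div_le_iff₀ hs0]
      nlinarith only [hle]
    calc |Rh2 r / r^3 - (ψ30 + Real.sqrt (ψ30^2 - q0^2))|
        = |Rh2 r / r^3 - b| := by rw [hb, hsdef]
      _ ≤ γ/s := hsl
      _ < η := by linarith only [h2, hη]
end

section
/- Assume Ψ(r,R) = ψ₃₀r³ + ψ₂₁r²R + ψ₁₂rR² + ψ₀₃R³ + o((|r|+|R|)³) as (r,R)→(0,0) with Ψ continuous, and Q(r) = q₀r³ + o(r³) as r→0⁺, with 0 < ψ₃₀ < |q₀|. Then there exists ε > 0 such that for every r ∈ (0,ε) and every R ∈ (0,r], one has R − 2Ψ(r,R) + Q(r)²/R > 0; in particular the apparent-horizon equation R = 2Ψ(r,R) − Q(r)²/R has no solution with 0 < R ≤ r, i.e. no horizon forms. -/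
open Filter Topology Asymptotics

set_option maxHeartbeats 1000000

/-- Case `p = 1`, `|q₀| > ψ₃₀`: no apparent horizon forms, i.e.
`R - 2Ψ(r,R) + Q(r)²/R > 0` for all small `r > 0` and all `0 < R ≤ r`. -/
theorem no_horizon_p_eq_one
    (Ψ : ℝ → ℝ → ℝ) (Q : ℝ → ℝ) (ψ30 ψ21 ψ12 ψ03 q0 : ℝ)
    (hψ30 : 0 < ψ30) (hlt : ψ30 < |q0|)
    (hΨcont : Continuous (fun q : ℝ × ℝ => Ψ q.1 q.2))
    (hΨ : (fun q : ℝ × ℝ =>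
        Ψ q.1 q.2 - (ψ30*q.1^3 + ψ21*q.1^2*q.2 + ψ12*q.1*q.2^2 + ψ03*q.2^3))
      =o[nhds ((0:ℝ), (0:ℝ))] fun q : ℝ × ℝ => (|q.1| + |q.2|)^3)
    (hQ : (fun r : ℝ => Q r - q0 * r^3) =o[𝓝[>] (0:ℝ)] fun r : ℝ => r^3) :
    ∃ ε > 0, ∀ r ∈ Set.Ioo (0:ℝ) ε, ∀ R : ℝ, 0 < R → R ≤ r →
      0 < R - 2 * Ψ r R + Q r ^ 2 / R ∧ R ≠ 2 * Ψ r R - Q r ^ 2 / R := by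
  set m := |q0| with hm
  have hmc : 0 < m - ψ30 := by linarith
  set δ : ℝ := (m - ψ30)/20 with hδdef
  have hδpos : 0 < δ := by positivity
  set C1 : ℝ := |ψ21| + |ψ12| + |ψ03| with hC1def
  have hC1nn : 0 ≤ C1 := by positivity
  set C : ℝ := ψ30 + C1 + 8*δ with hCdef
  have hCpos : 0 < C := by positivity
  clear_value m δ C1 C
  have h1 := hΨ.def hδpos
  rw [Metric.eventually_nhds_iff] at h1
  obtain ⟨ε₁, hε₁, H₁⟩ := h1
  have h2 := hQ.def hδpos
  obtain ⟨ε₂, hε₂, H₂⟩ := Metric.mem_nhdsWithin_iff.mp h2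
  refine ⟨min (min ε₁ ε₂) (min (min 1 (1/(2*C+1))) ((m-ψ30)/(2*C1+1))), by positivity, ?_⟩
  intro r hr R hRpos hRr
  obtain ⟨hr0, hrε⟩ := hr
  have hr1 : r < ε₁ := lt_of_lt_of_le hrε (le_trans (min_le_left _ _) (min_le_left _ _))
  have hr2 : r < ε₂ := lt_of_lt_of_le hrε (le_trans (min_le_left _ _) (min_le_right _ _))
  have hr3 : r < 1 := lt_of_lt_of_le hrε (le_trans (min_le_right _ _)
    (le_trans (min_le_left _ _) (min_le_left _ _)))
  have hr4 : r < 1/(2*C+1) := lt_of_lt_of_le hrε (le_trans (min_le_right _ _)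
    (le_trans (min_le_left _ _) (min_le_right _ _)))
  have hr5 : r < (m-ψ30)/(2*C1+1) := lt_of_lt_of_le hrε
    (le_trans (min_le_right _ _) (min_le_right _ _))
  have hr4' : (2*C+1)*r < 1 := by
    rw [lt_div_iff₀ (by positivity)] at hr4; linarith [hr4]
  have hr5' : (2*C1+1)*r < m - ψ30 := by
    rw [lt_div_iff₀ (by positivity)] at hr5; linarith [hr5]
  -- Ψ bound
  have hd : dist ((r,R) : ℝ×ℝ) ((0,0) : ℝ×ℝ) < ε₁ := by
    rw [Prod.dist_eq]
    simp only [Real.dist_eq, sub_zero]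
    rw [abs_of_pos hr0, abs_of_pos hRpos]
    exact max_lt hr1 (lt_of_le_of_lt hRr hr1)
  have hΨb := H₁ hd
  simp only [Real.norm_eq_abs, abs_of_pos hr0, abs_of_pos hRpos] at hΨb
  have hcube : |(r+R)^3| ≤ 8*r^3 := by
    rw [abs_of_nonneg (by positivity)]
    nlinarith [sq_nonneg (r - R), sq_nonneg (r + R), hRpos.le, hRr]
  have hΨabs : |Ψ r R - (ψ30*r^3 + ψ21*r^2*R + ψ12*r*R^2 + ψ03*R^3)| ≤ 8*δ*r^3 := by
    calc |Ψ r R - (ψ30*r^3 + ψ21*r^2*R + ψ12*r*R^2 + ψ03*R^3)| ≤ δ * |(r+R)^3| := hΨb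
    _ ≤ δ * (8*r^3) := by exact mul_le_mul_of_nonneg_left hcube hδpos.le
    _ = 8*δ*r^3 := by ring
  have hΨup : Ψ r R ≤ ψ30*r^3 + ψ21*r^2*R + ψ12*r*R^2 + ψ03*R^3 + 8*δ*r^3 := by
    have := abs_le.mp hΨabs
    linarith [this.2]
  -- Q bound
  have hd2 : dist r (0:ℝ) < ε₂ := by rw [Real.dist_eq, sub_zero, abs_of_pos hr0]; exact hr2
  have hQb := H₂ ⟨Metric.mem_ball.mpr hd2, hr0⟩
  simp only [Set.mem_setOf_eq] at hQb
  simp only [Real.norm_eq_abs] at hQb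
  have hr3abs : |r^3| = r^3 := abs_of_pos (by positivity)
  rw [hr3abs] at hQb
  have hQlow : (m - δ) * r^3 ≤ |Q r| := by
    have h := abs_sub_abs_le_abs_sub (q0 * r^3) (Q r)
    rw [abs_sub_comm] at h
    have : |q0 * r^3| = m * r^3 := by
      rw [abs_mul, hr3abs, ← hm]
    nlinarith [hQb, h]
  have hmono : ψ21*r^2*R + ψ12*r*R^2 + ψ03*R^3 ≤ C1 * r^2 * R := by
    have h1 : ψ21*(r^2*R) ≤ |ψ21| * (r^2*R) :=
      mul_le_mul_of_nonneg_right (le_abs_self _) (by positivity)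
    have h2 : ψ12*(r*R^2) ≤ |ψ12| * (r*R^2) :=
      mul_le_mul_of_nonneg_right (le_abs_self _) (by positivity)
    have h3 : ψ03*R^3 ≤ |ψ03| * R^3 :=
      mul_le_mul_of_nonneg_right (le_abs_self _) (by positivity)
    have h4 : |ψ12| * (r*R^2) ≤ |ψ12| * (r^2*R) := by
      apply mul_le_mul_of_nonneg_left _ (abs_nonneg _)
      nlinarith [mul_nonneg (mul_nonneg hr0.le hRpos.le) (sub_nonneg.mpr hRr)]
    have h5 : |ψ03| * R^3 ≤ |ψ03| * (r^2*R) := by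
      apply mul_le_mul_of_nonneg_left _ (abs_nonneg _)
      nlinarith [mul_nonneg (mul_nonneg hRpos.le (sub_nonneg.mpr hRr)) (by linarith : (0:ℝ) ≤ r + R)]
    rw [hC1def]; nlinarith [h1, h2, h3, h4, h5]
  have hQsq : 0 ≤ Q r ^ 2 / R := div_nonneg (sq_nonneg _) hRpos.le
  have key : 0 < R - 2 * Ψ r R + Q r ^ 2 / R := by
    by_cases hcase : r^2 ≤ R
    · -- R large: R dominates
      have hΨC : Ψ r R ≤ C * r^3 := by
        have h7 : C1 * r^2 * R ≤ C1 * r^3 := by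
          nlinarith [mul_nonneg hC1nn (mul_nonneg (mul_nonneg hr0.le hr0.le)
            (sub_nonneg.mpr hRr))]
        rw [hCdef]; linarith [hΨup, hmono, h7]
      clear hΨ hQ hΨcont H₁ H₂ h2 hd hd2 hΨb hQb hΨabs hΨup hmono hQlow
      have h8 : 0 < (1 - (2*C+1)*r) * r^2 :=
        mul_pos (by linarith) (by positivity)
      have h9 : r^3 ≤ r^2 := by nlinarith [mul_pos hr0 hr0]
      nlinarith [hΨC, hcase, hQsq, h8, h9]
    · push_neg at hcase
      -- R < r^2 : AM-GM
      clear hΨ hQ hΨcont H₁ H₂ h2 hd hd2 hΨb hQb hΨabs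
      have hA : 2 * |Q r| ≤ R + Q r ^ 2 / R := by
        have hdm : Q r ^ 2 / R * R = Q r ^ 2 := div_mul_cancel₀ _ hRpos.ne'
        have h : 2 * |Q r| * R ≤ (R + Q r ^ 2 / R) * R := by
          nlinarith [sq_nonneg (R - |Q r|), sq_abs (Q r)]
        exact le_of_mul_le_mul_right h hRpos
      have hΨ2 : Ψ r R ≤ ψ30*r^3 + C1*r^4 + 8*δ*r^3 := by
        have h6 : C1 * r^2 * R ≤ C1 * r^4 := by
          nlinarith [mul_nonneg hC1nn (mul_nonneg (mul_nonneg hr0.le hr0.le)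
            (sub_nonneg.mpr hcase.le))]
        linarith [hΨup, hmono, h6]
      have hC1r : 2 * C1 * r^4 ≤ (m - ψ30) * r^3 := by
        have h10 := mul_le_mul_of_nonneg_right hr5'.le (le_of_lt (pow_pos hr0 3))
        have h11 : (0:ℝ) < r^4 := pow_pos hr0 4
        nlinarith [h10, h11]
      have habsQ : 0 ≤ |Q r| := abs_nonneg _
      have hδr : 18 * (δ * r^3) = (18/20) * (m * r^3 - ψ30 * r^3) := by
        rw [hδdef]; ring
      have hpos : 0 < m * r^3 - ψ30 * r^3 := by
        have h12 := mul_pos hmc (pow_pos hr0 3)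
        nlinarith [h12]
      linarith [hA, hQlow, hΨ2, hC1r, hδr, hpos]
  exact ⟨key, fun h => by linarith [key, h]⟩
end

section
/- Assume Ψ(r,R) = ψ₃₀r³ + ψ₂₁r²R + ψ₁₂rR² + ψ₀₃R³ + o((|r|+|R|)³) as (r,R)→(0,0) with Ψ continuous, and Q(r) = q₀r³ + o(r³) as r→0⁺, with 0 < ψ₃₀ < |q₀|. Let Ψ₁(r,R) := Ψ(r,R) − Q(r)²/(2R) and let Y₁ : ℝ×ℝ → ℝ be any function. Then there exists ε > 0 such that for every r ∈ (0,ε) and every R ∈ (0,r] with Y₁(r,R) = 0, one has 2Ψ₁(r,R)/R − 1 + Y₁(r,R)² < 0; i.e. the quantity u₁² := 2Ψ₁/R − 1 + Y₁² is strictly negative everywhere on the would-be shell-crossing set {Y₁ = 0}, so the collapse halts (u₁ vanishes) before any shell-crossing singularity can occur. -/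
open Filter Topology Asymptotics

set_option maxHeartbeats 1600000 in
/-- Case `p = 1`, `|q₀| > ψ₃₀`: on the would-be shell-crossing set `{Y₁ = 0}`
the quantity `u₁² = 2Ψ₁/R − 1 + Y₁²` (with `Ψ₁ = Ψ − Q²/(2R)`) is strictly
negative, so the collapse halts before any shell-crossing singularity occurs. -/
theorem regular_solution_p_eq_one
    (Ψ Y₁ : ℝ → ℝ → ℝ) (Q : ℝ → ℝ) (ψ30 ψ21 ψ12 ψ03 q0 : ℝ)
    (hψ30 : 0 < ψ30) (hlt : ψ30 < |q0|)
    (hΨcont : Continuous (fun q : ℝ × ℝ => Ψ q.1 q.2))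
    (hΨ : (fun q : ℝ × ℝ =>
        Ψ q.1 q.2 - (ψ30*q.1^3 + ψ21*q.1^2*q.2 + ψ12*q.1*q.2^2 + ψ03*q.2^3))
      =o[nhds ((0:ℝ), (0:ℝ))] fun q : ℝ × ℝ => (|q.1| + |q.2|)^3)
    (hQ : (fun r : ℝ => Q r - q0 * r^3) =o[𝓝[>] (0:ℝ)] fun r : ℝ => r^3) :
    ∃ ε > 0, ∀ r ∈ Set.Ioo (0:ℝ) ε, ∀ R : ℝ, 0 < R → R ≤ r →
      Y₁ r R = 0 →
      2 * (Ψ r R - Q r ^ 2 / (2 * R)) / R - 1 + (Y₁ r R) ^ 2 < 0 := by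
  set g : ℝ := |q0| - ψ30 with hg
  have hgpos : 0 < g := sub_pos.mpr hlt
  set δ : ℝ := g / 10 with hδ
  have hδpos : 0 < δ := by positivity
  set ψ' : ℝ := ψ30 + 8 * δ with hψ'
  set q1 : ℝ := |q0| - δ with hq1
  have hψ'pos : 0 < ψ' := by positivity
  have hq1pos : 0 < q1 := by
    have : ψ30 < |q0| := hlt
    simp only [hq1, hδ, hg]; linarith
  have hgap : ψ' < q1 := by
    simp only [hψ', hq1, hδ, hg]; linarith
  set C : ℝ := |ψ21| + |ψ12| + |ψ03| with hC
  have hCpos : 0 ≤ C := by positivity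
  -- extract the Ψ bound
  have hΨev := hΨ.def hδpos
  rw [Metric.eventually_nhds_iff] at hΨev
  obtain ⟨ε1, hε1, hΨb⟩ := hΨev
  -- extract the Q bound
  have hQev := hQ.def hδpos
  obtain ⟨s, hs, hQb⟩ := Filter.eventually_iff_exists_mem.mp hQev
  rw [Metric.mem_nhdsWithin_iff] at hs
  obtain ⟨ε2, hε2, hs2⟩ := hs
  -- smallness in r
  set D : ℝ := (q1^2 - ψ'^2) / (2 * (C + 1) * q1^2) with hD
  have hDpos : 0 < D := by
    apply div_pos
    · nlinarith
    · positivity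
  refine ⟨min ε1 (min ε2 (Real.sqrt D)), by positivity, ?_⟩
  rintro r ⟨hr0, hrε⟩ R hR0 hRr hY
  have hrε1 : r < ε1 := lt_of_lt_of_le hrε (min_le_left _ _)
  have hrε2 : r < ε2 := lt_of_lt_of_le hrε ((min_le_right _ _).trans (min_le_left _ _))
  have hrεD : r < Real.sqrt D := lt_of_lt_of_le hrε ((min_le_right _ _).trans (min_le_right _ _))
  have hr2D : r^2 < D := by
    have := Real.sq_sqrt hDpos.le
    nlinarith [Real.sqrt_nonneg D]
  have hr2 : 2 * (C + 1) * q1^2 * r^2 < q1^2 - ψ'^2 := by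
    rw [hD, lt_div_iff₀ (by positivity)] at hr2D
    nlinarith
  -- Ψ bound at (r, R)
  have hΨ1 : |Ψ r R - (ψ30*r^3 + ψ21*r^2*R + ψ12*r*R^2 + ψ03*R^3)| ≤ δ * (r + R)^3 := by
    have hd : dist ((r, R) : ℝ × ℝ) ((0:ℝ), (0:ℝ)) < ε1 := by
      rw [Prod.dist_eq]
      simp only [Real.dist_eq, sub_zero]
      rw [abs_of_pos hr0, abs_of_pos hR0]
      exact max_lt hrε1 (lt_of_le_of_lt hRr hrε1)
    have := hΨb hd
    simp only [Real.norm_eq_abs] at this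
    have habs : |r| + |R| = r + R := by rw [abs_of_pos hr0, abs_of_pos hR0]
    rw [habs] at this
    calc |Ψ r R - (ψ30*r^3 + ψ21*r^2*R + ψ12*r*R^2 + ψ03*R^3)| ≤ δ * |(r + R)^3| := this
    _ = δ * (r + R)^3 := by rw [abs_of_nonneg (by positivity)]
  have hΨup : Ψ r R ≤ ψ' * r^3 + C * r^2 * R := by
    have h1 := (abs_le.mp hΨ1).2
    have ht : 0 ≤ r - R := sub_nonneg.mpr hRr
    have hcube : (r + R)^3 ≤ 8 * r^3 := by
      have h := pow_le_pow_left₀ (by positivity : (0:ℝ) ≤ r + R)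
        (by linarith : r + R ≤ 2 * r) 3
      calc (r + R)^3 ≤ (2*r)^3 := h
      _ = 8 * r^3 := by ring
    have hcube' : δ * (r + R)^3 ≤ δ * (8 * r^3) :=
      mul_le_mul_of_nonneg_left hcube hδpos.le
    have h2 : ψ21*r^2*R ≤ |ψ21| * r^2 * R := by
      have := mul_le_mul_of_nonneg_right (le_abs_self ψ21)
        (by positivity : (0:ℝ) ≤ r^2*R)
      linarith [this]
    have h3a : ψ12*r*R^2 ≤ |ψ12| * r * R^2 := by
      have := mul_le_mul_of_nonneg_right (le_abs_self ψ12)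
        (by positivity : (0:ℝ) ≤ r*R^2)
      linarith [this]
    have h3b : |ψ12| * r * R^2 ≤ |ψ12| * r^2 * R := by
      have := mul_nonneg (mul_nonneg (mul_nonneg (abs_nonneg ψ12) hr0.le) hR0.le) ht
      linarith [this]
    have h4a : ψ03*R^3 ≤ |ψ03| * R^3 := by
      have := mul_le_mul_of_nonneg_right (le_abs_self ψ03)
        (by positivity : (0:ℝ) ≤ R^3)
      linarith [this]
    have h4b : |ψ03| * R^3 ≤ |ψ03| * r^2 * R := by
      have := mul_nonneg (mul_nonneg (mul_nonneg (abs_nonneg ψ03) hR0.le) ht)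
        (by positivity : (0:ℝ) ≤ r + R)
      linarith [this]
    have hring : ψ' * r^3 + C * r^2 * R
        = ψ30*r^3 + 8*δ*r^3 + |ψ21| * r^2 * R + |ψ12| * r^2 * R + |ψ03| * r^2 * R := by
      simp only [hψ', hC]; ring
    linarith
  -- Q bound at r
  have hQ1 : |Q r - q0 * r^3| ≤ δ * r^3 := by
    have hmem : r ∈ Metric.ball (0:ℝ) ε2 ∩ Set.Ioi 0 := by
      constructor
      · simp [Real.dist_eq, abs_of_pos hr0]; exact hrε2
      · exact hr0
    have := hQb r (hs2 hmem)
    simp only [Real.norm_eq_abs] at this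
    calc |Q r - q0 * r^3| ≤ δ * |r^3| := this
    _ = δ * r^3 := by rw [abs_of_nonneg (by positivity)]
  have hQlow : q1 * r^3 ≤ |Q r| := by
    have h1 := abs_le.mp hQ1
    have h2 : |q0| * r^3 - |Q r| ≤ |q0 * r^3 - Q r| := by
      have := abs_sub_abs_le_abs_sub (q0 * r^3) (Q r)
      calc |q0| * r^3 - |Q r| = |q0 * r^3| - |Q r| := by
            rw [abs_mul, abs_of_nonneg (by positivity : (0:ℝ) ≤ r^3)]
      _ ≤ |q0 * r^3 - Q r| := this
    rw [abs_sub_comm] at h2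
    have := h1.2
    have habs := abs_le.mp hQ1
    simp only [hq1]
    linarith [h2, habs.2]
  have hQ2 : q1^2 * r^6 ≤ Q r ^ 2 := by
    have h := mul_le_mul hQlow hQlow (by positivity) (abs_nonneg (Q r))
    have h2 := abs_mul_abs_self (Q r)
    nlinarith [h, h2]
  -- key inequality
  have key : 2 * Ψ r R * R - Q r ^ 2 - R^2 < 0 := by
    have hθ : 2 * C * r^2 * q1^2 < q1^2 - ψ'^2 := by
      have := mul_nonneg (sq_nonneg q1) (sq_nonneg r)
      nlinarith [hr2, this]
    have h1θ : 0 < 1 - 2 * C * r^2 := by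
      by_contra h
      push_neg at h
      have h2 := mul_nonpos_of_nonpos_of_nonneg (by linarith : 1 - 2*C*r^2 ≤ 0)
        (sq_nonneg q1)
      nlinarith [hθ, sq_nonneg ψ', h2]
    have hbound : 2 * Ψ r R * R ≤ 2 * ψ' * r^3 * R + 2 * C * r^2 * R^2 := by
      have := mul_le_mul_of_nonneg_right hΨup (by positivity : (0:ℝ) ≤ 2*R)
      linarith [this]
    have hq1ψ : 0 < (1 - 2*C*r^2) * q1^2 - ψ'^2 := by linarith [hθ]
    have hid : (1 - 2*C*r^2) * (2*ψ'*r^3*R + (2*C*r^2)*R^2 - q1^2*r^6 - R^2)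
        = -(((1 - 2*C*r^2)*R - ψ'*r^3)^2) - ((1 - 2*C*r^2)*q1^2 - ψ'^2)*r^6 := by
      ring
    have hneg : (1 - 2*C*r^2) * (2*ψ'*r^3*R + (2*C*r^2)*R^2 - q1^2*r^6 - R^2) < 0 := by
      rw [hid]
      have ha := sq_nonneg ((1 - 2*C*r^2)*R - ψ'*r^3)
      have hb := mul_pos hq1ψ (pow_pos hr0 6)
      linarith [ha, hb]
    have h2' : 2*ψ'*r^3*R + (2*C*r^2)*R^2 - q1^2*r^6 - R^2 < 0 := by
      by_contra h
      push_neg at h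
      have := mul_nonneg h1θ.le h
      linarith [this, hneg]
    linarith [hbound, hQ2, h2']
  -- conclude
  rw [hY]
  have hR2 : (0:ℝ) < R^2 := by positivity
  have heq : 2 * (Ψ r R - Q r ^ 2 / (2 * R)) / R - 1 + (0:ℝ)^2
      = (2 * Ψ r R * R - Q r ^ 2 - R^2) / R^2 := by
    field_simp
    ring
  rw [heq]
  exact div_neg_of_neg_of_pos key hR2
end

section
/- Let ψ₃₀ > 0 and 0 < |q₀| < ψ₃₀. Let R_{h1}, R_sc, R_{h2} : (0,ε) → ℝ satisfy, as r→0⁺, R_{h1}(r) = (ψ₃₀ − √(ψ₃₀² − q₀²))·r³ + o(r³), R_sc(r) = (q₀²/ψ₃₀)·r³ + o(r³), and R_{h2}(r) = (ψ₃₀ + √(ψ₃₀² − q₀²))·r³ + o(r³). Then there exists δ ∈ (0,ε) such that R_{h1}(r) < R_sc(r) < R_{h2}(r) for all r ∈ (0,δ). -/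
open Filter Topology Asymptotics

lemma eventually_lt_of_coeff_lt (a b : ℝ) (hab : a < b) (f g : ℝ → ℝ)
    (hf : (fun r : ℝ => f r - a * r^3) =o[𝓝[>] (0:ℝ)] fun r : ℝ => r^3)
    (hg : (fun r : ℝ => g r - b * r^3) =o[𝓝[>] (0:ℝ)] fun r : ℝ => r^3) :
    ∀ᶠ r in 𝓝[>] (0:ℝ), f r < g r := by
  have hc : 0 < (b - a) / 4 := by linarith
  have h1 := hf.def hc
  have h2 := hg.def hc
  filter_upwards [h1, h2, self_mem_nhdsWithin] with r hr1 hr2 hrpos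
  have hrpos' : (0:ℝ) < r := hrpos
  have hr3 : 0 < r ^ 3 := by positivity
  have hn : ‖r ^ 3‖ = r ^ 3 := by rw [Real.norm_eq_abs, abs_of_pos hr3]
  rw [hn] at hr1 hr2
  have e1 : f r - a * r ^ 3 ≤ (b - a) / 4 * r ^ 3 := by
    have := (abs_le.mp (by simpa [Real.norm_eq_abs] using hr1)).2; linarith
  have e2 : -((b - a) / 4 * r ^ 3) ≤ g r - b * r ^ 3 := by
    have := (abs_le.mp (by simpa [Real.norm_eq_abs] using hr2)).1; linarith
  nlinarith [hr3]

/-- For `0 < |q₀| < ψ₃₀` the two apparent-horizon branches bound the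
shell-crossing curve, one from below and the other from above:
`R_{h1}(r) < R_sc(r) < R_{h2}(r)` for small `r > 0`. -/
theorem horizons_bound_shell_crossing
    (ψ30 q0 ε : ℝ) (hq0 : 0 < |q0|) (hlt : |q0| < ψ30) (hε : 0 < ε)
    (Rh1 Rsc Rh2 : ℝ → ℝ)
    (hRh1 : (fun r : ℝ => Rh1 r - (ψ30 - Real.sqrt (ψ30^2 - q0^2)) * r^3)
      =o[𝓝[>] (0:ℝ)] fun r : ℝ => r^3)
    (hRsc : (fun r : ℝ => Rsc r - (q0^2 / ψ30) * r^3)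
      =o[𝓝[>] (0:ℝ)] fun r : ℝ => r^3)
    (hRh2 : (fun r : ℝ => Rh2 r - (ψ30 + Real.sqrt (ψ30^2 - q0^2)) * r^3)
      =o[𝓝[>] (0:ℝ)] fun r : ℝ => r^3) :
    ∃ δ : ℝ, 0 < δ ∧ δ < ε ∧
      ∀ r ∈ Set.Ioo (0:ℝ) δ, Rh1 r < Rsc r ∧ Rsc r < Rh2 r := by
  have hψ : 0 < ψ30 := lt_of_le_of_lt (abs_nonneg _) hlt
  set s := Real.sqrt (ψ30^2 - q0^2) with hs
  have hq2 : q0 ^ 2 < ψ30 ^ 2 := by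
    have := sq_abs q0; nlinarith [abs_nonneg q0]
  have hq2pos : 0 < q0 ^ 2 := by
    have := sq_abs q0; nlinarith
  have hs2 : s ^ 2 = ψ30 ^ 2 - q0 ^ 2 := Real.sq_sqrt (by linarith)
  have hspos : 0 < s := Real.sqrt_pos.mpr (by linarith)
  have hsψ : s < ψ30 := by nlinarith
  -- coefficient inequalities
  have hc1 : ψ30 - s < q0 ^ 2 / ψ30 := by
    rw [lt_div_iff₀ hψ]; nlinarith
  have hc2 : q0 ^ 2 / ψ30 < ψ30 + s := by
    rw [div_lt_iff₀ hψ]; nlinarith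
  have E1 := eventually_lt_of_coeff_lt _ _ hc1 Rh1 Rsc hRh1 hRsc
  have E2 := eventually_lt_of_coeff_lt _ _ hc2 Rsc Rh2 hRsc hRh2
  have E : ∀ᶠ r in 𝓝[>] (0:ℝ), Rh1 r < Rsc r ∧ Rsc r < Rh2 r :=
    E1.and E2
  rw [eventually_nhdsWithin_iff, Metric.eventually_nhds_iff] at E
  obtain ⟨δ', hδ', hE⟩ := E
  refine ⟨min δ' ε / 2, by positivity, ?_, ?_⟩
  · have : min δ' ε ≤ ε := min_le_right _ _
    linarith
  · intro r hr
    refine hE ?_ hr.1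
    rw [Real.dist_eq, sub_zero, abs_of_pos hr.1]
    have : min δ' ε ≤ δ' := min_le_left _ _
    linarith [hr.2]
end
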